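/- arXiv:1405.3427 — 2 statements merged into one kernel-verified Lean document; each statement's English description precedes it below -/
import Mathlib

section
/- Let R be a closed SMLL net, i.e. an SMLL net in which no occurrence of ⊥ appears in any of its conclusion formulas. If R is in normal form for the reduction relation →, then R contains no cut links (lazy cut elimination suffices to eliminate all cuts from closed nets). -/
/-! # SMLL: multiplicative linear logic with synchronization

Formalization of the proof-structures, correctness criterion, reduction and
multi-token machine (SIAM) of Dal Lago, Faggian, Hasuo, Yoshimizu,
"The Geometry of Synchronization". -/

/-- SMLL formulas (in negation normal form):
`A ::= 1 | ⊥ | X | X⊥ | A ⊗ A | A ⅋ A`. -/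
inductive Formula : Type
  | one : Formula
  | bot : Formula
  | var : ℕ → Formula
  | covar : ℕ → Formula
  | tens : Formula → Formula → Formula
  | parr : Formula → Formula → Formula
  deriving DecidableEq

namespace Formula

/-- Linear negation. -/
def dual : Formula → Formula
  | one => bot
  | bot => one
  | var n => covar n
  | covar n => var n
  | tens A B => parr A.dual B.dual
  | parr A B => tens A.dual B.dual

/-- Positive formulas: `P ::= 1 | P ⊗ P`. -/
inductive Positive : Formula → Prop
  | one : Positive one
  | tens {A B : Formula} : Positive A → Positive B → Positive (tens A B)

/-- Negative formulas: `N ::= ⊥ | N ⅋ N`. -/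
inductive Negative : Formula → Prop
  | bot : Negative bot
  | parr {A B : Formula} : Negative A → Negative B → Negative (parr A B)

/-- A formula is polarized when it is positive or negative. -/
def Polarized (A : Formula) : Prop := Positive A ∨ Negative A

/-- Whether `⊥` occurs in a formula. -/
def hasBotB : Formula → Bool
  | one => false
  | bot => true
  | var _ => false
  | covar _ => false
  | tens A B => hasBotB A || hasBotB B
  | parr A B => hasBotB A || hasBotB B

/-- Addresses of occurrences inside a formula: `false` = left, `true` = right. -/
abbrev Addr := List Bool

/-- Subformula at a given address (if the address is meaningful). -/
def sub : Formula → Addr → Option Formula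
  | A, [] => some A
  | tens A _, false :: m => sub A m
  | tens _ B, true :: m => sub B m
  | parr A _, false :: m => sub A m
  | parr _ B, true :: m => sub B m
  | _, _ :: _ => none

def IsAtom : Formula → Prop
  | one => True
  | bot => True
  | var _ => True
  | covar _ => True
  | tens _ _ => False
  | parr _ _ => False

/-- `m` is the address of an occurrence of an atom in `A`. -/
def AtomOcc (A : Formula) (m : Addr) : Prop := ∃ a, sub A m = some a ∧ IsAtom a

/-- The atom occurrence at `m` in `A` is positive (it is `1` or `X`). -/
def PosOcc (A : Formula) (m : Addr) : Prop :=
  ∃ a, sub A m = some a ∧ (a = one ∨ ∃ n, a = var n)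

/-- The atom occurrence at `m` in `A` is negative (it is `⊥` or `X⊥`). -/
def NegOcc (A : Formula) (m : Addr) : Prop :=
  ∃ a, sub A m = some a ∧ (a = bot ∨ ∃ n, a = covar n)

theorem NegOcc.atomOcc {A : Formula} {m : Addr} (h : NegOcc A m) : AtomOcc A m := by
  obtain ⟨a, ha, h⟩ := h
  refine ⟨a, ha, ?_⟩
  rcases h with rfl | ⟨n, rfl⟩ <;> trivial

theorem PosOcc.atomOcc {A : Formula} {m : Addr} (h : PosOcc A m) : AtomOcc A m := by
  obtain ⟨a, ha, h⟩ := h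
  refine ⟨a, ha, ?_⟩
  rcases h with rfl | ⟨n, rfl⟩ <;> trivial

end Formula

/-- The sorts of links of an SMLL structure. -/
inductive LinkSort : Type
  | ax | cut | tens | parr | one | bot | sync
  deriving DecidableEq

/-- An SMLL proof-structure (with boxes): a finite directed multigraph whose
edges are typed by formulas and whose nodes are links.  Every edge is the
conclusion of exactly one link (its `src`); it is the premiss of the link
`tgt`, if any (edges with no target are the conclusions of the structure).
`pIdx` indexes an edge among the premisses of its target (for `⊗`/`⅋`-links:
`0` = left, `1` = right; for sync links it pairs premisses with conclusions);
`cIdx` indexes an edge among the conclusions of its source (for sync links,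
the `i`-th conclusion corresponds to the `i`-th premiss).  Each `bot`-link is
the lock of a box; `box n` is the innermost box containing the node `n` and
`boxes n` is the set of all boxes containing `n`. -/
structure Struct : Type 1 where
  Edge : Type
  Node : Type
  edgeFintype : Fintype Edge
  nodeFintype : Fintype Node
  edgeDecEq : DecidableEq Edge
  nodeDecEq : DecidableEq Node
  typ : Edge → Formula
  sort : Node → LinkSort
  src : Edge → Node
  tgt : Edge → Option Node
  pIdx : Edge → ℕ
  cIdx : Edge → ℕ
  box : Node → Option Node
  boxes : Node → Finset Node

attribute [instance] Struct.edgeFintype Struct.nodeFintype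
attribute [instance] Struct.edgeDecEq Struct.nodeDecEq

namespace Struct

variable (S : Struct)

/-- The conclusions of a link. -/
def concls (n : S.Node) : Finset S.Edge := Finset.univ.filter fun e => S.src e = n

/-- The premisses of a link. -/
def prems (n : S.Node) : Finset S.Edge := Finset.univ.filter fun e => S.tgt e = some n

/-- The conclusions of the structure. -/
def IsConcl (e : S.Edge) : Prop := S.tgt e = none

/-- Well-formedness of an SMLL structure: the constraints that the sort of a
link induces on the number and the types of its premisses and conclusions,
together with the coherence of the nesting of boxes. -/
def WF : Prop :=
  (∀ n, S.sort n = .ax → S.prems n = ∅ ∧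
    ∃ e f, e ≠ f ∧ S.concls n = {e, f} ∧ S.typ f = (S.typ e).dual) ∧
  (∀ n, S.sort n = .cut → S.concls n = ∅ ∧
    ∃ e f, e ≠ f ∧ S.prems n = {e, f} ∧ S.typ f = (S.typ e).dual) ∧
  (∀ n, S.sort n = .tens → ∃ e f g, e ≠ f ∧ S.prems n = {e, f} ∧
    S.pIdx e = 0 ∧ S.pIdx f = 1 ∧ S.concls n = {g} ∧
    S.typ g = .tens (S.typ e) (S.typ f)) ∧
  (∀ n, S.sort n = .parr → ∃ e f g, e ≠ f ∧ S.prems n = {e, f} ∧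
    S.pIdx e = 0 ∧ S.pIdx f = 1 ∧ S.concls n = {g} ∧
    S.typ g = .parr (S.typ e) (S.typ f)) ∧
  (∀ n, S.sort n = .one → S.prems n = ∅ ∧ ∃ e, S.concls n = {e} ∧ S.typ e = .one) ∧
  (∀ n, S.sort n = .bot → S.prems n = ∅ ∧ ∃ e, S.concls n = {e} ∧ S.typ e = .bot) ∧
  (∀ n, S.sort n = .sync →
    (∀ e ∈ S.prems n, (S.typ e).Polarized) ∧
    (∀ e ∈ S.prems n, ∃! f, f ∈ S.concls n ∧ S.cIdx f = S.pIdx e) ∧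
    (∀ f ∈ S.concls n, ∃! e, e ∈ S.prems n ∧ S.pIdx e = S.cIdx f) ∧
    (∀ e ∈ S.prems n, ∀ f ∈ S.concls n, S.cIdx f = S.pIdx e → S.typ f = S.typ e)) ∧
  (∀ n b, b ∈ S.boxes n → S.sort b = .bot) ∧
  (∀ n, S.box n = none → S.boxes n = ∅) ∧
  (∀ n b, S.box n = some b → b ∉ S.boxes b ∧ S.boxes n = insert b (S.boxes b)) ∧
  (∀ e n, S.tgt e = some n → S.boxes n ⊆ S.boxes (S.src e))

/-- `b` is the representative of the node `m` in the level-`ℓ` graph (the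
graph in which each box strictly below level `ℓ` is collapsed to a single
box-node, identified with its `bot`-link).  For `ℓ = none` this is the
`0`-graph. -/
def RepAt (ℓ : Option S.Node) (m b : S.Node) : Prop :=
  (S.box m = ℓ ∧ b = m) ∨ (b ∈ S.boxes m ∧ S.box b = ℓ)

/-- Edge `e` joins the nodes `u` and `v` (undirectedly) in the level-`ℓ` graph. -/
def ConnectsAt (ℓ : Option S.Node) (e : S.Edge) (u v : S.Node) : Prop :=
  ∃ t, S.tgt e = some t ∧ (S.box t = ℓ ∨ S.box (S.src e) = ℓ) ∧
    ((S.RepAt ℓ (S.src e) u ∧ S.RepAt ℓ t v) ∨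
     (S.RepAt ℓ (S.src e) v ∧ S.RepAt ℓ t u))

/-- The out-edges of a sync link are its positive conclusions and its negative
premisses. -/
def OutEdgeOf (l : S.Node) (e : S.Edge) : Prop :=
  S.sort l = .sync ∧
  ((S.src e = l ∧ (S.typ e).Positive) ∨ (S.tgt e = some l ∧ (S.typ e).Negative))

/-- There is a switching cycle in the level-`ℓ` graph: a cyclic undirected
simple path which uses at most one of the two premisses of each `⅋`-link and
at most one out-edge of each sync link. -/
def SwitchingCycleAt (ℓ : Option S.Node) : Prop :=
  ∃ (k : ℕ) (v : Fin (k + 1) → S.Node) (e : Fin (k + 1) → S.Edge),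
    Function.Injective v ∧ Function.Injective e ∧
    (∀ i, S.ConnectsAt ℓ (e i) (v i) (v (i + 1))) ∧
    (∀ p, S.sort p = .parr → Set.Subsingleton {i | S.tgt (e i) = some p}) ∧
    (∀ l, S.sort l = .sync → Set.Subsingleton {i | S.OutEdgeOf l (e i)})

/-- Correctness criterion: no switching cycle in the `0`-graph, and,
recursively, no switching cycle in the graph of the content of any box. -/
def Correct : Prop := ∀ ℓ : Option S.Node, ¬ S.SwitchingCycleAt ℓ

/-- A net is a well-formed correct structure. -/
def IsNet : Prop := S.WF ∧ S.Correct

/-! ## Sync paths and hereditary conclusions -/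

/-- One step of a sync path: entering a sync link on a premiss and coming out
on the corresponding conclusion. -/
def SyncStepE (e f : S.Edge) : Prop :=
  ∃ l, S.sort l = .sync ∧ S.tgt e = some l ∧ S.src f = l ∧ S.cIdx f = S.pIdx e

/-- `e` is a hereditary conclusion of the link `l`: there is a sync path from
a conclusion of `l` to `e`. -/
def HereditaryConcl (l : S.Node) (e : S.Edge) : Prop :=
  ∃ f, S.src f = l ∧ Relation.ReflTransGen S.SyncStepE f e

/-- The edge emerges from a box: its source is a `bot`-link (the edge is the
lock of a box) or lies inside some box. -/
def FromBox (e : S.Edge) : Prop := S.sort (S.src e) = .bot ∨ S.box (S.src e) ≠ none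

/-- `e` is a hereditary conclusion of a box. -/
def HereditaryBoxConcl (e : S.Edge) : Prop :=
  ∃ f, S.FromBox f ∧ Relation.ReflTransGen S.SyncStepE f e

/-- A ready cut: a cut at depth 0 neither of whose premisses is a hereditary
conclusion of a box. -/
def ReadyCut (c : S.Node) : Prop :=
  S.sort c = .cut ∧ S.box c = none ∧ ∀ e ∈ S.prems c, ¬ S.HereditaryBoxConcl e

/-! ## Polarized paths and the order on links -/

/-- A node is polarized when all of its conclusions are polarized. -/
def PolarizedNode (n : S.Node) : Prop := ∀ e ∈ S.concls n, (S.typ e).Polarized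

/-- A single step of a polarized path from link `a` to link `b` along the
polarized edge `e`: downwards on positive edges, upwards on negative edges,
connecting polarized nodes and never entering boxes. -/
def PolStep (e : S.Edge) (a b : S.Node) : Prop :=
  S.box a = none ∧ S.box b = none ∧ S.PolarizedNode a ∧ S.PolarizedNode b ∧
  (((S.typ e).Positive ∧ S.src e = a ∧ S.tgt e = some b) ∨
   ((S.typ e).Negative ∧ S.tgt e = some a ∧ S.src e = b))

/-- `a ≺ b` : there is a (simple) polarized path from `a` to `b`. -/
def prec (a b : S.Node) : Prop :=
  ∃ (k : ℕ) (v : Fin (k + 2) → S.Node) (e : Fin (k + 1) → S.Edge),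
    v 0 = a ∧ v (Fin.last _) = b ∧
    Function.Injective v ∧ Function.Injective e ∧
    ∀ i : Fin (k + 1), S.PolStep (e i) (v i.castSucc) (v i.succ)

/-- SMLL⁰ structures: no unit links (hence no boxes). -/
def UnitFree : Prop := ∀ n : S.Node, S.sort n ≠ .one ∧ S.sort n ≠ .bot

/-- Closed structures: no `⊥` occurs in the conclusions. -/
def Closed : Prop := ∀ e : S.Edge, S.tgt e = none → (S.typ e).hasBotB = false

end Struct

/-! ## Reduction -/

/-- A partial injection `j` whose (some-)range is exactly `X`. -/
def PInjOnto {α β : Type*} (j : α → Option β) (X : Set β) : Prop :=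
  (∀ a a' b, j a = some b → j a' = some b → a = a') ∧
  (∀ a b, j a = some b → b ∈ X) ∧
  (∀ b ∈ X, ∃ a, j a = some b)

/-- `j` is total. -/
def JTotal {α β : Type*} (j : α → Option β) : Prop := ∀ a, j a ≠ none

/-- The structures `Q` and `R` agree, along the correspondences `jN`, `jE`,
on all edges outside `XE` and all nodes outside `XN`. -/
def AgreesOn (Q R : Struct) (jN : Q.Node → Option R.Node)
    (jE : Q.Edge → Option R.Edge) (XE : Set R.Edge) (XN : Set R.Node) : Prop :=
  (∀ x y, jE x = some y → y ∉ XE →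
    Q.typ x = R.typ y ∧ jN (Q.src x) = some (R.src y) ∧
    (Q.tgt x).bind jN = R.tgt y ∧ Q.pIdx x = R.pIdx y ∧ Q.cIdx x = R.cIdx y) ∧
  (∀ n m, jN n = some m → m ∉ XN →
    Q.sort n = R.sort m ∧ (Q.box n).bind jN = R.box m ∧
    (∀ b b', jN b = some b' → (b ∈ Q.boxes n ↔ b' ∈ R.boxes m)))

/-- The `ax/cut` step: a cut between a conclusion `v` of an axiom `a` and the
dual premiss is removed together with the axiom; the remaining conclusion `u`
of the axiom and the remaining premiss `q` of the cut are merged. -/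
def AxCutStep (R Q : Struct) : Prop :=
  ∃ (a c : R.Node) (v u q : R.Edge),
    R.sort a = .ax ∧ R.sort c = .cut ∧ R.box a = none ∧ R.box c = none ∧
    v ≠ u ∧ v ≠ q ∧ u ≠ q ∧
    R.concls a = {v, u} ∧ R.prems c = {v, q} ∧
    ∃ (jN : Q.Node → Option R.Node) (jE : Q.Edge → Option R.Edge),
      JTotal jN ∧ JTotal jE ∧
      PInjOnto jN {n | n ≠ a ∧ n ≠ c} ∧
      PInjOnto jE {x | x ≠ v ∧ x ≠ u} ∧
      AgreesOn Q R jN jE {q} ∅ ∧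
      (∀ x, jE x = some q →
        Q.typ x = R.typ q ∧ jN (Q.src x) = some (R.src q) ∧
        (Q.tgt x).bind jN = R.tgt u ∧ Q.pIdx x = R.pIdx u ∧ Q.cIdx x = R.cIdx q)

/-- The `⊗/⅋` step: a cut between `A ⊗ B` and `A⊥ ⅋ B⊥` is replaced by two
cuts between the respective premisses. -/
def TensParrStep (R Q : Struct) : Prop :=
  ∃ (c t p : R.Node) (s s' a1 a2 b1 b2 : R.Edge),
    R.sort c = .cut ∧ R.sort t = .tens ∧ R.sort p = .parr ∧
    R.box c = none ∧ R.box t = none ∧ R.box p = none ∧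
    s ≠ s' ∧ R.prems c = {s, s'} ∧ R.concls t = {s} ∧ R.concls p = {s'} ∧
    a1 ≠ a2 ∧ R.prems t = {a1, a2} ∧ R.pIdx a1 = 0 ∧ R.pIdx a2 = 1 ∧
    b1 ≠ b2 ∧ R.prems p = {b1, b2} ∧ R.pIdx b1 = 0 ∧ R.pIdx b2 = 1 ∧
    ∃ (jN : Q.Node → Option R.Node) (jE : Q.Edge → Option R.Edge) (c' : Q.Node),
      JTotal jE ∧
      PInjOnto jN {n | n ≠ t ∧ n ≠ p} ∧
      PInjOnto jE {x | x ≠ s ∧ x ≠ s'} ∧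
      jN c' = none ∧ (∀ n, jN n = none → n = c') ∧
      Q.sort c' = .cut ∧ Q.box c' = none ∧ Q.boxes c' = ∅ ∧
      AgreesOn Q R jN jE {a1, a2, b1, b2} ∅ ∧
      (∀ x y, jE x = some y → y = a1 ∨ y = b1 →
        Q.typ x = R.typ y ∧ jN (Q.src x) = some (R.src y) ∧
        (Q.tgt x).bind jN = some c ∧ Q.cIdx x = R.cIdx y) ∧
      (∀ x y, jE x = some y → y = a2 ∨ y = b2 →
        Q.typ x = R.typ y ∧ jN (Q.src x) = some (R.src y) ∧
        Q.tgt x = some c' ∧ Q.cIdx x = R.cIdx y)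

/-- Commutation of a sync link with a `⊗` or `⅋` link: the sync link acting
on the conclusion `z` of the multiplicative link `m` (with corresponding sync
conclusion `w`) is pushed above `m`, now acting on the two premisses `x`, `y`
of `m` via two fresh sync positions (indices `i₁`, `i₂`) with fresh edges
`x'`, `y'`. -/
def SyncMultStep (R Q : Struct) : Prop :=
  ∃ (l m : R.Node) (z w x y : R.Edge) (i₁ i₂ : ℕ),
    R.sort l = .sync ∧ (R.sort m = .tens ∨ R.sort m = .parr) ∧
    R.box l = none ∧ R.box m = none ∧
    R.src z = m ∧ R.tgt z = some l ∧ R.src w = l ∧ R.cIdx w = R.pIdx z ∧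
    x ≠ y ∧ R.prems m = {x, y} ∧ R.pIdx x = 0 ∧ R.pIdx y = 1 ∧
    i₁ ≠ i₂ ∧
    (∀ e, R.tgt e = some l → R.pIdx e ≠ i₁ ∧ R.pIdx e ≠ i₂) ∧
    (∀ e, R.src e = l → R.cIdx e ≠ i₁ ∧ R.cIdx e ≠ i₂) ∧
    ∃ (jN : Q.Node → Option R.Node) (jE : Q.Edge → Option R.Edge)
      (l' m' : Q.Node) (x' y' : Q.Edge),
      JTotal jN ∧ PInjOnto jN Set.univ ∧
      PInjOnto jE {e | e ≠ z} ∧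
      jN l' = some l ∧ jN m' = some m ∧
      x' ≠ y' ∧ jE x' = none ∧ jE y' = none ∧ (∀ e, jE e = none → e = x' ∨ e = y') ∧
      AgreesOn Q R jN jE {x, y, w} ∅ ∧
      (∀ e, jE e = some x →
        Q.typ e = R.typ x ∧ jN (Q.src e) = some (R.src x) ∧
        Q.tgt e = some l' ∧ Q.pIdx e = i₁ ∧ Q.cIdx e = R.cIdx x) ∧
      (∀ e, jE e = some y →
        Q.typ e = R.typ y ∧ jN (Q.src e) = some (R.src y) ∧
        Q.tgt e = some l' ∧ Q.pIdx e = i₂ ∧ Q.cIdx e = R.cIdx y) ∧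
      (∀ e, jE e = some w →
        Q.typ e = R.typ w ∧ Q.src e = m' ∧
        (Q.tgt e).bind jN = R.tgt w ∧ Q.pIdx e = R.pIdx w ∧ Q.cIdx e = R.cIdx w) ∧
      (Q.typ x' = R.typ x ∧ Q.src x' = l' ∧ Q.tgt x' = some m' ∧
        Q.pIdx x' = 0 ∧ Q.cIdx x' = i₁) ∧
      (Q.typ y' = R.typ y ∧ Q.src y' = l' ∧ Q.tgt y' = some m' ∧
        Q.pIdx y' = 1 ∧ Q.cIdx y' = i₂)

/-- Commutation of a sync link with an axiom: a sync link acting on a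
positive conclusion `u` of an axiom (with corresponding conclusion `u'`) is
moved to the axiom's other conclusion `v` (of type `P⊥`), with a fresh sync
position of index `j` and fresh edge `v'`. -/
def SyncAxStep (R Q : Struct) : Prop :=
  ∃ (l a : R.Node) (u u' v : R.Edge) (j : ℕ),
    R.sort l = .sync ∧ R.sort a = .ax ∧ R.box l = none ∧ R.box a = none ∧
    (R.typ u).Positive ∧ u ≠ v ∧ R.concls a = {u, v} ∧
    R.tgt u = some l ∧ R.src u' = l ∧ R.cIdx u' = R.pIdx u ∧ u' ≠ u ∧ u' ≠ v ∧
    (∀ e, R.tgt e = some l → R.pIdx e ≠ j) ∧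
    (∀ e, R.src e = l → R.cIdx e ≠ j) ∧
    ∃ (jN : Q.Node → Option R.Node) (jE : Q.Edge → Option R.Edge)
      (l' a' : Q.Node) (v' : Q.Edge),
      JTotal jN ∧ PInjOnto jN Set.univ ∧ PInjOnto jE {e | e ≠ u} ∧
      jN l' = some l ∧ jN a' = some a ∧
      jE v' = none ∧ (∀ e, jE e = none → e = v') ∧
      AgreesOn Q R jN jE {u', v} ∅ ∧
      (∀ e, jE e = some u' →
        Q.typ e = R.typ u' ∧ Q.src e = a' ∧ Q.cIdx e = R.cIdx u ∧
        (Q.tgt e).bind jN = R.tgt u' ∧ Q.pIdx e = R.pIdx u') ∧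
      (∀ e, jE e = some v →
        Q.typ e = R.typ v ∧ Q.src e = a' ∧ Q.cIdx e = R.cIdx v ∧
        Q.tgt e = some l' ∧ Q.pIdx e = j) ∧
      (Q.typ v' = R.typ v ∧ Q.src v' = l' ∧ Q.cIdx v' = j ∧
        (Q.tgt v').bind jN = R.tgt v ∧ Q.pIdx v' = R.pIdx v)

/-- Commutation of a sync link with a cut: a sync link acting on the premiss
`d'` (of negative type `P⊥`) of a cut is moved to the other premiss `q`. -/
def SyncCutStep (R Q : Struct) : Prop :=
  ∃ (l c : R.Node) (d d' q : R.Edge) (j : ℕ),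
    R.sort l = .sync ∧ R.sort c = .cut ∧ R.box l = none ∧ R.box c = none ∧
    (R.typ d').Negative ∧
    R.src d' = l ∧ R.tgt d' = some c ∧ R.tgt d = some l ∧ R.pIdx d = R.cIdx d' ∧
    d' ≠ q ∧ d ≠ q ∧ d ≠ d' ∧ R.prems c = {d', q} ∧
    (∀ e, R.tgt e = some l → R.pIdx e ≠ j) ∧
    (∀ e, R.src e = l → R.cIdx e ≠ j) ∧
    ∃ (jN : Q.Node → Option R.Node) (jE : Q.Edge → Option R.Edge)
      (l' c' : Q.Node) (q' : Q.Edge),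
      JTotal jN ∧ PInjOnto jN Set.univ ∧ PInjOnto jE {e | e ≠ d'} ∧
      jN l' = some l ∧ jN c' = some c ∧
      jE q' = none ∧ (∀ e, jE e = none → e = q') ∧
      AgreesOn Q R jN jE {d, q} ∅ ∧
      (∀ e, jE e = some d →
        Q.typ e = R.typ d ∧ jN (Q.src e) = some (R.src d) ∧ Q.cIdx e = R.cIdx d ∧
        Q.tgt e = some c' ∧ Q.pIdx e = R.pIdx d') ∧
      (∀ e, jE e = some q →
        Q.typ e = R.typ q ∧ jN (Q.src e) = some (R.src q) ∧ Q.cIdx e = R.cIdx q ∧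
        Q.tgt e = some l' ∧ Q.pIdx e = j) ∧
      (Q.typ q' = R.typ q ∧ Q.src q' = l' ∧ Q.cIdx q' = j ∧
        Q.tgt q' = some c' ∧ Q.pIdx q' = R.pIdx q)

/-- Sync elimination: a sync link all of whose premisses are conclusions of
`one`-links is erased, merging each premiss with its corresponding
conclusion. -/
def SyncElimStep (R Q : Struct) : Prop :=
  ∃ l : R.Node, R.sort l = .sync ∧ R.box l = none ∧
    (∀ e ∈ R.prems l, R.sort (R.src e) = .one) ∧
    ∃ (jN : Q.Node → Option R.Node) (jE : Q.Edge → Option R.Edge),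
      JTotal jN ∧ JTotal jE ∧
      PInjOnto jN {n | n ≠ l} ∧
      PInjOnto jE {e | R.src e ≠ l} ∧
      AgreesOn Q R jN jE {e | R.tgt e = some l} ∅ ∧
      (∀ x e f, jE x = some e → R.tgt e = some l → R.src f = l →
        R.cIdx f = R.pIdx e →
        Q.typ x = R.typ e ∧ jN (Q.src x) = some (R.src e) ∧
        (Q.tgt x).bind jN = R.tgt f ∧ Q.pIdx x = R.pIdx f ∧ Q.cIdx x = R.cIdx e)

/-- The `one/⊥` step (box opening): a cut between the conclusion `o` of a
`one`-link `n₁` and the lock `k` of a box `b` removes the cut, the `one`-link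
and the `bot`-link, and opens the box. -/
def OneBotStep (R Q : Struct) : Prop :=
  ∃ (c n₁ b : R.Node) (o k : R.Edge),
    R.sort c = .cut ∧ R.sort n₁ = .one ∧ R.sort b = .bot ∧
    R.box c = none ∧ R.box n₁ = none ∧ R.box b = none ∧
    o ≠ k ∧ R.prems c = {o, k} ∧ R.src o = n₁ ∧ R.src k = b ∧
    ∃ (jN : Q.Node → Option R.Node) (jE : Q.Edge → Option R.Edge),
      JTotal jN ∧ JTotal jE ∧
      PInjOnto jN {n | n ≠ c ∧ n ≠ n₁ ∧ n ≠ b} ∧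
      PInjOnto jE {e | e ≠ o ∧ e ≠ k} ∧
      (∀ x e, jE x = some e →
        Q.typ x = R.typ e ∧ jN (Q.src x) = some (R.src e) ∧
        (Q.tgt x).bind jN = R.tgt e ∧ Q.pIdx x = R.pIdx e ∧ Q.cIdx x = R.cIdx e) ∧
      (∀ n m, jN n = some m →
        Q.sort n = R.sort m ∧
        (∀ b₀ b₀', jN b₀ = some b₀' → (b₀ ∈ Q.boxes n ↔ b₀' ∈ R.boxes m ∧ b₀' ≠ b)) ∧
        (R.box m = some b → Q.box n = none) ∧
        (R.box m ≠ some b → (Q.box n).bind jN = R.box m))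

/-- The sync-commutation and sync-elimination steps. -/
def SyncRed (R Q : Struct) : Prop :=
  SyncMultStep R Q ∨ SyncAxStep R Q ∨ SyncCutStep R Q ∨ SyncElimStep R Q

/-- The reduction relation `→` on SMLL structures (applied at depth 0 only). -/
def Step (R Q : Struct) : Prop :=
  AxCutStep R Q ∨ TensParrStep R Q ∨ SyncRed R Q ∨ OneBotStep R Q

/-- Isomorphism of structures. -/
def Isom (R Q : Struct) : Prop :=
  ∃ (en : R.Node ≃ Q.Node) (ee : R.Edge ≃ Q.Edge),
    (∀ e, Q.typ (ee e) = R.typ e) ∧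
    (∀ e, Q.src (ee e) = en (R.src e)) ∧
    (∀ e, Q.tgt (ee e) = (R.tgt e).map en) ∧
    (∀ e, Q.pIdx (ee e) = R.pIdx e) ∧
    (∀ e, Q.cIdx (ee e) = R.cIdx e) ∧
    (∀ n, Q.sort (en n) = R.sort n) ∧
    (∀ n, Q.box (en n) = (R.box n).map en) ∧
    (∀ n, Q.boxes (en n) = (R.boxes n).image en)

/-! ## The SIAM: a synchronous interaction abstract machine -/

namespace Struct

variable (S : Struct)

/-- The value of a token: either an occurrence of an atom on an edge, or a
position `(e, i)` on the lock `e` of a box (`BOTBOX`). -/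
inductive PosVal (S : Struct) : Type
  | atom : S.Edge → Formula.Addr → PosVal S
  | lock : S.Edge → ℕ → PosVal S

/-- Initial positions: negative atom occurrences in the conclusions. -/
def InitPos (p : S.Edge × Formula.Addr) : Prop :=
  S.tgt p.1 = none ∧ Formula.NegOcc (S.typ p.1) p.2

/-- Final positions: positive atom occurrences in the conclusions. -/
def FinPos (p : S.Edge × Formula.Addr) : Prop :=
  S.tgt p.1 = none ∧ Formula.PosOcc (S.typ p.1) p.2

/-- One positions: conclusions of `one`-links. -/
def OnePos (p : S.Edge × Formula.Addr) : Prop :=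
  S.sort (S.src p.1) = .one ∧ p.2 = []

/-- Valid token values: genuine atom occurrences, or positions on the lock of
a box. -/
def ValidVal : PosVal S → Prop
  | .atom e m => Formula.AtomOcc (S.typ e) m
  | .lock e _ => S.sort (S.src e) = .bot

end Struct

/-- A state of the SIAM machine `M_S`: a (partial) function from
`INIT(S) ∪ L` (with `L ⊆ ONES(S)`) to the positions of `S`; it records, for
each token, its origin and its current position. -/
structure SState (S : Struct) where
  f : S.Edge × Formula.Addr → Option (Struct.PosVal S)
  dom_subset : ∀ p, f p ≠ none → S.InitPos p ∨ S.OnePos p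
  init_total : ∀ p, S.InitPos p → f p ≠ none
  val_valid : ∀ p v, f p = some v → S.ValidVal v

namespace Struct

variable (S : Struct)

/-- The box `b` is unlocked in state `T`: some token sits on its lock. -/
def Unlocked (T : SState S) (b : S.Node) : Prop :=
  ∃ p e i, T.f p = some (.lock e i) ∧ S.src e = b

/-- A link is active: all the boxes containing it are unlocked. -/
def Active (T : SState S) (n : S.Node) : Prop :=
  ∀ b ∈ S.boxes n, S.Unlocked T b

end Struct

open Classical in
/-- The initial state `I_S`: the identity on the initial positions. -/
noncomputable def initState (S : Struct) : SState S where
  f := fun p => if S.InitPos p then some (.atom p.1 p.2) else none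
  dom_subset := by
    intro p hp
    by_cases h : S.InitPos p
    · exact Or.inl h
    · simp [h] at hp
  init_total := by intro p hp; simp [hp]
  val_valid := by
    intro p v hv
    by_cases h : S.InitPos p
    · simp only [if_pos h, Option.some.injEq] at hv
      subst hv
      exact h.2.atomOcc
    · simp [h] at hv

/-- The transition relation of the SIAM.  Tokens on negative atom occurrences
move upwards, tokens on positive atom occurrences move downwards; all tokens
cross a sync link simultaneously, when each of its in-edges is saturated;
active `one`-links may spawn a token; a token reaching the lock of a box
unlocks it.  Tokens may only cross active links (so they can enter a box only
when it is unlocked). -/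
inductive STrans (S : Struct) : SState S → SState S → Prop
  | axUp {T T' : SState S} {p : S.Edge × Formula.Addr} {e e' : S.Edge}
      {m : Formula.Addr} {a : S.Node} :
      T.f p = some (.atom e m) →
      Formula.NegOcc (S.typ e) m →
      S.src e = a → S.sort a = .ax → S.Active T a →
      S.src e' = a → e' ≠ e →
      (∀ q, q ≠ p → T'.f q = T.f q) →
      T'.f p = some (.atom e' m) →
      STrans S T T'
  | cutDown {T T' : SState S} {p : S.Edge × Formula.Addr} {e e' : S.Edge}
      {m : Formula.Addr} {c : S.Node} :
      T.f p = some (.atom e m) →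
      Formula.PosOcc (S.typ e) m →
      S.tgt e = some c → S.sort c = .cut → S.Active T c →
      S.tgt e' = some c → e' ≠ e →
      (∀ q, q ≠ p → T'.f q = T.f q) →
      T'.f p = some (.atom e' m) →
      STrans S T T'
  | multDown {T T' : SState S} {p : S.Edge × Formula.Addr} {e g : S.Edge}
      {m : Formula.Addr} {n : S.Node} {b : Bool} :
      T.f p = some (.atom e m) →
      Formula.PosOcc (S.typ e) m →
      S.tgt e = some n → (S.sort n = .tens ∨ S.sort n = .parr) → S.Active T n →
      S.src g = n →
      S.pIdx e = (if b then 1 else 0) →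
      (∀ q, q ≠ p → T'.f q = T.f q) →
      T'.f p = some (.atom g (b :: m)) →
      STrans S T T'
  | multUp {T T' : SState S} {p : S.Edge × Formula.Addr} {e g : S.Edge}
      {m : Formula.Addr} {n : S.Node} {b : Bool} :
      T.f p = some (.atom g (b :: m)) →
      Formula.NegOcc (S.typ g) (b :: m) →
      S.src g = n → (S.sort n = .tens ∨ S.sort n = .parr) → S.Active T n →
      S.tgt e = some n →
      S.pIdx e = (if b then 1 else 0) →
      (∀ q, q ≠ p → T'.f q = T.f q) →
      T'.f p = some (.atom e m) →
      STrans S T T'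
  | lockTok {T T' : SState S} {p : S.Edge × Formula.Addr} {e : S.Edge}
      {b' : S.Node} :
      T.f p = some (.atom e []) →
      S.typ e = .bot →
      S.src e = b' → S.sort b' = .bot → S.Active T b' →
      (∀ q, q ≠ p → T'.f q = T.f q) →
      T'.f p = some (.lock e 0) →
      STrans S T T'
  | oneSpawn {T T' : SState S} {n : S.Node} {e : S.Edge} :
      S.sort n = .one → S.Active T n → S.src e = n →
      T.f (e, []) = none →
      (∀ q, q ≠ (e, []) → T'.f q = T.f q) →
      T'.f (e, []) = some (.atom e []) →
      STrans S T T'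
  | syncCross {T T' : SState S} {l : S.Node} :
      S.sort l = .sync → S.Active T l →
      (∃ q e m, T.f q = some (.atom e m) ∧
        ((S.tgt e = some l ∧ (S.typ e).Positive) ∨
         (S.src e = l ∧ (S.typ e).Negative))) →
      (∀ e, ((S.tgt e = some l ∧ (S.typ e).Positive) ∨
             (S.src e = l ∧ (S.typ e).Negative)) →
        ∀ m, Formula.AtomOcc (S.typ e) m → ∃ q, T.f q = some (.atom e m)) →
      (∀ q e m, T.f q = some (.atom e m) → S.tgt e = some l → (S.typ e).Positive →
        ∃ e', S.src e' = l ∧ S.cIdx e' = S.pIdx e ∧ T'.f q = some (.atom e' m)) →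
      (∀ q e m, T.f q = some (.atom e m) → S.src e = l → (S.typ e).Negative →
        ∃ e', S.tgt e' = some l ∧ S.pIdx e' = S.cIdx e ∧ T'.f q = some (.atom e' m)) →
      (∀ q, (∀ e m, T.f q = some (.atom e m) →
          ¬(S.tgt e = some l ∧ (S.typ e).Positive) ∧
          ¬(S.src e = l ∧ (S.typ e).Negative)) →
        T'.f q = T.f q) →
      STrans S T T'

/-- A final state: its image consists of all the final positions together
with positions on the locks of boxes. -/
def SState.Final {S : Struct} (T : SState S) : Prop :=
  (∀ q v, T.f q = some v →
    (∃ e m, v = .atom e m ∧ S.FinPos (e, m)) ∨ (∃ e i, v = .lock e i)) ∧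
  (∀ e m, S.FinPos (e, m) → ∃ q, T.f q = some (.atom e m))

/-- The machine of `S` deadlocks: some maximal transition sequence from the
initial state ends in a non-final state. -/
def Deadlocks (S : Struct) : Prop :=
  ∃ T : SState S, Relation.ReflTransGen (STrans S) (initState S) T ∧
    (∀ T', ¬ STrans S T T') ∧ ¬ T.Final

/-- The machine of `S` is deadlock free: every maximal transition sequence
from the initial state ends in a final state. -/
def DeadlockFree (S : Struct) : Prop :=
  ∀ T : SState S, Relation.ReflTransGen (STrans S) (initState S) T →
    (∀ T', ¬ STrans S T T') → T.Final

/-! ## The closure of a net -/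

/-- A structure with a designated (main) conclusion. -/
structure PNet : Type 1 where
  S : Struct
  main : S.Edge

/-- The net consisting of a single `one`-link. -/
def oneNet : PNet where
  S :=
    { Edge := Unit
      Node := Unit
      edgeFintype := inferInstance
      nodeFintype := inferInstance
      edgeDecEq := inferInstance
      nodeDecEq := inferInstance
      typ := fun _ => .one
      sort := fun _ => .one
      src := fun _ => ()
      tgt := fun _ => none
      pIdx := fun _ => 0
      cIdx := fun _ => 0
      box := fun _ => none
      boxes := fun _ => ∅ }
  main := ()

/-- The net consisting of a single axiom of conclusions `A⊥, A`, with main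
conclusion `A`. -/
def axNet (A : Formula) : PNet where
  S :=
    { Edge := Bool
      Node := Unit
      edgeFintype := inferInstance
      nodeFintype := inferInstance
      edgeDecEq := inferInstance
      nodeDecEq := inferInstance
      typ := fun e => if e then A else A.dual
      sort := fun _ => .ax
      src := fun _ => ()
      tgt := fun _ => none
      pIdx := fun _ => 0
      cIdx := fun e => if e then 1 else 0
      box := fun _ => none
      boxes := fun _ => ∅ }
  main := true

/-- Joining the main conclusions of two nets by a binary link of sort `s`
and conclusion type `C`. -/
def joinNet (s : LinkSort) (C : Formula) (P Q : PNet) : PNet where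
  S :=
    { Edge := Option (P.S.Edge ⊕ Q.S.Edge)
      Node := Option (P.S.Node ⊕ Q.S.Node)
      edgeFintype := inferInstance
      nodeFintype := inferInstance
      edgeDecEq := inferInstance
      nodeDecEq := inferInstance
      typ := fun e =>
        match e with
        | none => C
        | some (.inl x) => P.S.typ x
        | some (.inr y) => Q.S.typ y
      sort := fun n =>
        match n with
        | none => s
        | some (.inl x) => P.S.sort x
        | some (.inr y) => Q.S.sort y
      src := fun e =>
        match e with
        | none => none
        | some (.inl x) => some (.inl (P.S.src x))
        | some (.inr y) => some (.inr (Q.S.src y))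
      tgt := fun e =>
        match e with
        | none => none
        | some (.inl x) =>
            if x = P.main then some none
            else (P.S.tgt x).map fun n => some (.inl n)
        | some (.inr y) =>
            if y = Q.main then some none
            else (Q.S.tgt y).map fun n => some (.inr n)
      pIdx := fun e =>
        match e with
        | none => 0
        | some (.inl x) => if x = P.main then 0 else P.S.pIdx x
        | some (.inr y) => if y = Q.main then 1 else Q.S.pIdx y
      cIdx := fun e =>
        match e with
        | none => 0
        | some (.inl x) => P.S.cIdx x
        | some (.inr y) => Q.S.cIdx y
      box := fun n =>
        match n with
        | none => none
        | some (.inl x) => (P.S.box x).map fun m => some (.inl m)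
        | some (.inr y) => (Q.S.box y).map fun m => some (.inr m)
      boxes := fun n =>
        match n with
        | none => ∅
        | some (.inl x) => (P.S.boxes x).image fun m => some (.inl m)
        | some (.inr y) => (Q.S.boxes y).image fun m => some (.inr m) }
  main := none

/-- The net `R°(A)`, by induction on `A`: it has conclusions `Γ, A` with no
occurrence of `⊥` in `Γ`, and main conclusion `A`. -/
def circNet : Formula → PNet
  | .one => oneNet
  | .bot => axNet .bot
  | .var n => axNet (.var n)
  | .covar n => axNet (.covar n)
  | .tens A B => joinNet .tens (.tens A B) (circNet A) (circNet B)
  | .parr A B => joinNet .parr (.parr A B) (circNet A) (circNet B)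

/-- The conclusions of `R` containing an occurrence of `⊥`. -/
abbrev BadC (R : Struct) :=
  {e : R.Edge // R.tgt e = none ∧ (R.typ e).hasBotB = true}

/-- The closure `R̂` of `R`: each conclusion `A` of `R` containing `⊥` is cut
against the main conclusion of a copy of `R°(A⊥)`. -/
def netClosure (R : Struct) : Struct where
  Edge := R.Edge ⊕ Σ e : BadC R, (circNet (R.typ e.val).dual).S.Edge
  Node := R.Node ⊕ ((Σ e : BadC R, (circNet (R.typ e.val).dual).S.Node) ⊕ BadC R)
  edgeFintype := inferInstance
  nodeFintype := inferInstance
  edgeDecEq := inferInstance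
  nodeDecEq := inferInstance
  typ := fun e =>
    match e with
    | .inl e => R.typ e
    | .inr ⟨b, x⟩ => (circNet (R.typ b.val).dual).S.typ x
  sort := fun n =>
    match n with
    | .inl n => R.sort n
    | .inr (.inl ⟨b, x⟩) => (circNet (R.typ b.val).dual).S.sort x
    | .inr (.inr _) => .cut
  src := fun e =>
    match e with
    | .inl e => .inl (R.src e)
    | .inr ⟨b, x⟩ => .inr (.inl ⟨b, (circNet (R.typ b.val).dual).S.src x⟩)
  tgt := fun e =>
    match e with
    | .inl e =>
        if h : R.tgt e = none ∧ (R.typ e).hasBotB = true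
        then some (.inr (.inr ⟨e, h⟩))
        else (R.tgt e).map Sum.inl
    | .inr ⟨b, x⟩ =>
        if x = (circNet (R.typ b.val).dual).main
        then some (.inr (.inr b))
        else ((circNet (R.typ b.val).dual).S.tgt x).map fun n => .inr (.inl ⟨b, n⟩)
  pIdx := fun e =>
    match e with
    | .inl e => R.pIdx e
    | .inr ⟨b, x⟩ =>
        if x = (circNet (R.typ b.val).dual).main then 1
        else (circNet (R.typ b.val).dual).S.pIdx x
  cIdx := fun e =>
    match e with
    | .inl e => R.cIdx e
    | .inr ⟨b, x⟩ => (circNet (R.typ b.val).dual).S.cIdx x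
  box := fun n =>
    match n with
    | .inl n => (R.box n).map Sum.inl
    | .inr (.inl ⟨b, x⟩) =>
        ((circNet (R.typ b.val).dual).S.box x).map fun m => .inr (.inl ⟨b, m⟩)
    | .inr (.inr _) => none
  boxes := fun n =>
    match n with
    | .inl n => (R.boxes n).image Sum.inl
    | .inr (.inl ⟨b, x⟩) =>
        ((circNet (R.typ b.val).dual).S.boxes x).image fun m => .inr (.inl ⟨b, m⟩)
    | .inr (.inr _) => ∅


/-! ## Auxiliary lemmas for the proof of lazy cut elimination -/

section LazyAux

namespace Formula

theorem dual_dual : ∀ A : Formula, A.dual.dual = A := by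
  intro A; induction A <;> simp [dual, *]

theorem dual_eq_iff {A B : Formula} : A.dual = B ↔ A = B.dual := by
  constructor <;> rintro rfl <;> rw [dual_dual]

theorem Positive.hasBot {A : Formula} (h : A.Positive) : A.hasBotB = false := by
  induction h <;> simp [hasBotB, *]

theorem Negative.hasBot {A : Formula} (h : A.Negative) : A.hasBotB = true := by
  induction h <;> simp [hasBotB, *]

theorem Positive.dualNeg {A : Formula} (h : A.Positive) : A.dual.Negative := by
  induction h <;> constructor <;> assumption

theorem Negative.dualPos {A : Formula} (h : A.Negative) : A.dual.Positive := by
  induction h <;> constructor <;> assumption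

theorem not_pos_neg {A : Formula} (h : A.Positive) (h' : A.Negative) : False := by
  cases h <;> cases h'

theorem Polarized.dual {A : Formula} (h : A.Polarized) : A.dual.Polarized := by
  rcases h with h | h
  · exact Or.inr h.dualNeg
  · exact Or.inl h.dualPos

theorem ne_tens_self (A B : Formula) : tens A B ≠ A := by
  intro h
  have := congrArg sizeOf h
  simp only [sizeOf, Formula._sizeOf_1] at this
  omega

theorem ne_parr_self (A B : Formula) : parr A B ≠ A := by
  intro h
  have := congrArg sizeOf h
  simp only [sizeOf, Formula._sizeOf_1] at this
  omega

theorem ne_tens_self' (A B : Formula) : tens A B ≠ B := by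
  intro h
  have := congrArg sizeOf h
  simp only [sizeOf, Formula._sizeOf_1] at this
  omega

theorem ne_parr_self' (A B : Formula) : parr A B ≠ B := by
  intro h
  have := congrArg sizeOf h
  simp only [sizeOf, Formula._sizeOf_1] at this
  omega

end Formula

namespace Struct

variable {S : Struct}

theorem mem_concls {e : S.Edge} {n : S.Node} : e ∈ S.concls n ↔ S.src e = n := by
  simp [concls]

theorem mem_prems {e : S.Edge} {n : S.Node} : e ∈ S.prems n ↔ S.tgt e = some n := by
  simp [prems]

/-- Components of well-formedness. -/
def WF.ax (h : S.WF) := h.1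
def WF.cut (h : S.WF) := h.2.1
def WF.tens (h : S.WF) := h.2.2.1
def WF.parr (h : S.WF) := h.2.2.2.1
def WF.one (h : S.WF) := h.2.2.2.2.1
def WF.bot (h : S.WF) := h.2.2.2.2.2.1
def WF.sync (h : S.WF) := h.2.2.2.2.2.2.1
def WF.boxSort (h : S.WF) := h.2.2.2.2.2.2.2.1
def WF.boxesNone (h : S.WF) := h.2.2.2.2.2.2.2.2.1
def WF.boxSome (h : S.WF) := h.2.2.2.2.2.2.2.2.2.1
def WF.boxesSub (h : S.WF) := h.2.2.2.2.2.2.2.2.2.2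

theorem WF.mem_box (h : S.WF) {n b : S.Node} (hb : S.box n = some b) :
    b ∈ S.boxes n := by
  rw [(h.boxSome n b hb).2]; exact Finset.mem_insert_self _ _

theorem WF.box_sort (h : S.WF) {n b : S.Node} (hb : S.box n = some b) :
    S.sort b = .bot := h.boxSort n b (h.mem_box hb)

theorem WF.box_eq_none (h : S.WF) {n : S.Node} (hb : S.boxes n = ∅) :
    S.box n = none := by
  cases hbox : S.box n with
  | none => rfl
  | some b => exact absurd (hb ▸ h.mem_box hbox) (Finset.notMem_empty _)

/-- Nodes reachable by an edge from a depth-0 node are at depth 0. -/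
theorem WF.tgt_depth0 (h : S.WF) {e : S.Edge} {n : S.Node}
    (h0 : S.box (S.src e) = none) (ht : S.tgt e = some n) : S.box n = none := by
  apply h.box_eq_none
  have h1 := h.boxesSub e n ht
  have h2 := h.boxesNone _ h0
  rw [h2] at h1
  exact Finset.subset_empty.mp h1

theorem WF.boxes_trans (h : S.WF) :
    ∀ k (n : S.Node), (S.boxes n).card ≤ k → ∀ b ∈ S.boxes n, S.boxes b ⊆ S.boxes n := by
  intro k
  induction k with
  | zero =>
    intro n hcard b hb
    rw [Finset.card_eq_zero.mp (Nat.le_zero.mp hcard)] at hb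
    exact absurd hb (Finset.notMem_empty _)
  | succ k ih =>
    intro n hcard b hb
    cases hbox : S.box n with
    | none =>
      rw [h.boxesNone n hbox] at hb
      exact absurd hb (Finset.notMem_empty _)
    | some b1 =>
      obtain ⟨hnotin, heq⟩ := h.boxSome n b1 hbox
      rw [heq] at hb
      rcases Finset.mem_insert.mp hb with rfl | hb1
      · rw [heq]; exact Finset.subset_insert _ _
      · have hcard1 : (S.boxes b1).card ≤ k := by
          have := Finset.card_insert_of_notMem hnotin
          rw [heq] at hcard; omega
        refine (ih b1 hcard1 b hb1).trans ?_
        rw [heq]; exact Finset.subset_insert _ _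

theorem WF.boxes_subset (h : S.WF) {n b : S.Node} (hb : b ∈ S.boxes n) :
    S.boxes b ⊆ S.boxes n := h.boxes_trans _ n le_rfl b hb

/-- Any nonempty set of boxes contains an outermost one. -/
theorem WF.exists_outermost (h : S.WF) {n : S.Node} (hne : (S.boxes n).Nonempty) :
    ∃ b ∈ S.boxes n, S.box b = none := by
  obtain ⟨b, hb, hmin⟩ := Finset.exists_min_image (S.boxes n) (fun b => (S.boxes b).card) hne
  refine ⟨b, hb, ?_⟩
  cases hbox : S.box b with
  | none => rfl
  | some b2 =>
    obtain ⟨hnotin, heq⟩ := h.boxSome b b2 hbox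
    have hb2 : b2 ∈ S.boxes n := h.boxes_subset hb (h.mem_box hbox)
    have := hmin b2 hb2
    rw [heq, Finset.card_insert_of_notMem hnotin] at this
    omega

/-- If some node is at positive depth, then there is a depth-0 `bot`-link. -/
theorem WF.exists_bot0 (h : S.WF) {n b : S.Node} (hb : S.box n = some b) :
    ∃ b0, S.sort b0 = .bot ∧ S.box b0 = none := by
  have hbn : b ∈ S.boxes n := h.mem_box hb
  cases hbox : S.box b with
  | none => exact ⟨b, h.box_sort hb, hbox⟩
  | some b2 =>
    have hne : (S.boxes b).Nonempty := ⟨b2, h.mem_box hbox⟩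
    obtain ⟨b0, hb0, hb0none⟩ := h.exists_outermost hne
    exact ⟨b0, h.boxSort b b0 hb0, hb0none⟩

/-- Two fresh indices for sync positions. -/
theorem freshIdx (S : Struct) :
    ∃ j1 j2 : ℕ, j1 ≠ j2 ∧ ∀ e : S.Edge,
      S.pIdx e ≠ j1 ∧ S.pIdx e ≠ j2 ∧ S.cIdx e ≠ j1 ∧ S.cIdx e ≠ j2 := by
  classical
  set M := (Finset.univ.image S.pIdx ∪ Finset.univ.image S.cIdx)
  set m := M.sup id
  have hp : ∀ e : S.Edge, S.pIdx e ≤ m := by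
    intro e
    exact Finset.le_sup (f := id)
      (Finset.mem_union_left _ (Finset.mem_image_of_mem _ (Finset.mem_univ e)))
  have hc : ∀ e : S.Edge, S.cIdx e ≤ m := by
    intro e
    exact Finset.le_sup (f := id)
      (Finset.mem_union_right _ (Finset.mem_image_of_mem _ (Finset.mem_univ e)))
  refine ⟨m + 1, m + 2, by omega, fun e => ?_⟩
  have := hp e; have := hc e
  omega

/-- The type of a conclusion of each sort of link. -/
theorem WF.typ_of_one (h : S.WF) {n : S.Node} (hn : S.sort n = .one)
    {e : S.Edge} (he : S.src e = n) : S.typ e = .one := by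
  obtain ⟨-, f, hf, hft⟩ := h.one n hn
  have : e ∈ S.concls n := mem_concls.mpr he
  rw [hf, Finset.mem_singleton] at this
  rw [this, hft]

theorem WF.typ_of_bot (h : S.WF) {n : S.Node} (hn : S.sort n = .bot)
    {e : S.Edge} (he : S.src e = n) : S.typ e = .bot := by
  obtain ⟨-, f, hf, hft⟩ := h.bot n hn
  have : e ∈ S.concls n := mem_concls.mpr he
  rw [hf, Finset.mem_singleton] at this
  rw [this, hft]

theorem WF.not_src_cut (h : S.WF) {n : S.Node} (hn : S.sort n = .cut)
    {e : S.Edge} (he : S.src e = n) : False := by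
  have : e ∈ S.concls n := mem_concls.mpr he
  rw [(h.cut n hn).1] at this
  exact Finset.notMem_empty _ this

theorem WF.no_prems_sorts (h : S.WF) {n : S.Node}
    (hn : S.sort n = .ax ∨ S.sort n = .one ∨ S.sort n = .bot)
    {e : S.Edge} (he : S.tgt e = some n) : False := by
  have hin : e ∈ S.prems n := mem_prems.mpr he
  rcases hn with hn | hn | hn
  · rw [(h.ax n hn).1] at hin; exact Finset.notMem_empty _ hin
  · rw [(h.one n hn).1] at hin; exact Finset.notMem_empty _ hin
  · rw [(h.bot n hn).1] at hin; exact Finset.notMem_empty _ hin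

/-- Matching conclusion for a premiss of a sync link. -/
theorem WF.sync_prem_concl (h : S.WF) {l : S.Node} (hl : S.sort l = .sync)
    {e : S.Edge} (he : S.tgt e = some l) :
    ∃ f, S.src f = l ∧ S.cIdx f = S.pIdx e ∧ S.typ f = S.typ e ∧
      ∀ f', S.src f' = l → S.cIdx f' = S.pIdx e → f' = f := by
  obtain ⟨hpol, hpc, hcp, htyp⟩ := h.sync l hl
  have hmem : e ∈ S.prems l := mem_prems.mpr he
  obtain ⟨f, ⟨hf1, hf2⟩, huniq⟩ := hpc e hmem
  exact ⟨f, mem_concls.mp hf1, hf2, htyp e hmem f hf1 hf2,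
    fun f' h1 h2 => huniq f' ⟨mem_concls.mpr h1, h2⟩⟩

/-- Matching premiss for a conclusion of a sync link. -/
theorem WF.sync_concl_prem (h : S.WF) {l : S.Node} (hl : S.sort l = .sync)
    {f : S.Edge} (hf : S.src f = l) :
    ∃ e, S.tgt e = some l ∧ S.pIdx e = S.cIdx f ∧ S.typ f = S.typ e ∧
      ∀ e', S.tgt e' = some l → S.pIdx e' = S.cIdx f → e' = e := by
  obtain ⟨hpol, hpc, hcp, htyp⟩ := h.sync l hl
  have hmem : f ∈ S.concls l := mem_concls.mpr hf
  obtain ⟨e, ⟨he1, he2⟩, huniq⟩ := hcp f hmem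
  exact ⟨e, mem_prems.mp he1, he2, htyp e he1 f hmem he2.symm,
    fun e' h1 h2 => huniq e' ⟨mem_prems.mpr h1, h2⟩⟩

theorem WF.sync_prem_pol (h : S.WF) {l : S.Node} (hl : S.sort l = .sync)
    {e : S.Edge} (he : S.tgt e = some l) : (S.typ e).Polarized :=
  (h.sync l hl).1 e (mem_prems.mpr he)

theorem WF.sync_concl_pol (h : S.WF) {l : S.Node} (hl : S.sort l = .sync)
    {f : S.Edge} (hf : S.src f = l) : (S.typ f).Polarized := by
  obtain ⟨e, he, -, htyp, -⟩ := h.sync_concl_prem hl hf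
  rw [htyp]
  exact h.sync_prem_pol hl he

end Struct

end LazyAux


section Cycles

namespace Struct

variable {S : Struct}

theorem succ_mod {i d : ℕ} : (i + 1) % d = (i % d + 1) % d := by
  conv_lhs => rw [← Nat.mod_add_div i d]
  rw [Nat.add_right_comm, Nat.add_mul_mod_self_left]

/-- A canonical depth-0 representative of a node. -/
noncomputable def nodeRep (S : Struct) (n : S.Node) : S.Node :=
  if h : ((S.boxes n).filter (fun b => S.box b = none)).Nonempty then h.choose else n

theorem WF.nodeRep_eq (h : S.WF) {n : S.Node} (h0 : S.box n = none) :
    S.nodeRep n = n := by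
  rw [nodeRep, dif_neg]
  rw [h.boxesNone n h0]
  simp [Finset.Nonempty]

theorem WF.nodeRep_spec (h : S.WF) {n b : S.Node} (hb : S.box n = some b) :
    S.nodeRep n ∈ S.boxes n ∧ S.box (S.nodeRep n) = none := by
  have hne : (S.boxes n).Nonempty := ⟨b, h.mem_box hb⟩
  obtain ⟨b0, hb0, hb0n⟩ := h.exists_outermost hne
  have hfne : ((S.boxes n).filter (fun b => S.box b = none)).Nonempty :=
    ⟨b0, Finset.mem_filter.mpr ⟨hb0, hb0n⟩⟩
  rw [nodeRep, dif_pos hfne]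
  have := hfne.choose_spec
  rw [Finset.mem_filter] at this
  exact this

theorem WF.repAt_nodeRep (h : S.WF) (n : S.Node) : S.RepAt none n (S.nodeRep n) := by
  cases hb : S.box n with
  | none => exact Or.inl ⟨hb, h.nodeRep_eq hb⟩
  | some b => exact Or.inr ⟨(h.nodeRep_spec hb).1, (h.nodeRep_spec hb).2⟩

/-- Default-valued target. -/
noncomputable def tgtD (S : Struct) (e : S.Edge) : S.Node := (S.tgt e).getD (S.src e)

theorem tgtD_eq {e : S.Edge} {n : S.Node} (h : S.tgt e = some n) : S.tgtD e = n := by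
  rw [tgtD, h]; rfl

/-- Tail and head of an oriented edge traversal (`true` = downwards, i.e.
from source to target). -/
noncomputable def tailN (S : Struct) (t : S.Edge × Bool) : S.Node :=
  if t.2 then S.src t.1 else S.tgtD t.1

noncomputable def headN (S : Struct) (t : S.Edge × Bool) : S.Node :=
  if t.2 then S.tgtD t.1 else S.nodeRep (S.src t.1)

theorem tailN_true {e : S.Edge} : S.tailN (e, true) = S.src e := rfl
theorem tailN_false {e : S.Edge} : S.tailN (e, false) = S.tgtD e := rfl
theorem headN_true {e : S.Edge} : S.headN (e, true) = S.tgtD e := rfl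
theorem headN_false {e : S.Edge} : S.headN (e, false) = S.nodeRep (S.src e) := rfl

/-- A one-edge loop in the 0-graph contradicts correctness. -/
theorem Correct.connects_self (hC : S.Correct) {e : S.Edge} {u : S.Node}
    (h : S.ConnectsAt none e u u) : False := by
  apply hC none
  refine ⟨0, fun _ => u, fun _ => e, ?_, ?_, ?_, ?_, ?_⟩
  · exact fun i j _ => Fin.ext (by omega)
  · exact fun i j _ => Fin.ext (by omega)
  · intro i; exact h
  · intro p _ i _ j _; exact Fin.ext (by omega)
  · intro l _ i _ j _; exact Fin.ext (by omega)

/-- Two parallel edges from a non-sync node into a non-sync non-parr node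
contradict correctness. -/
theorem Correct.no_double_edge (hC : S.Correct) {x y : S.Edge} {a c : S.Node}
    (hxy : x ≠ y) (hac : a ≠ c)
    (hsx : S.src x = a) (hsy : S.src y = a)
    (htx : S.tgt x = some c) (hty : S.tgt y = some c)
    (hba : S.box a = none) (hbc : S.box c = none)
    (hsa : S.sort a ≠ .sync) (hsc : S.sort c ≠ .sync) (hpc : S.sort c ≠ .parr) :
    False := by
  apply hC none
  have repa : S.RepAt none a a := Or.inl ⟨hba, rfl⟩
  have repc : S.RepAt none c c := Or.inl ⟨hbc, rfl⟩
  refine ⟨1, ![a, c], ![x, y], ?_, ?_, ?_, ?_, ?_⟩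
  · intro i j h
    fin_cases i <;> fin_cases j <;> simp_all
  · intro i j h
    fin_cases i <;> fin_cases j <;> simp_all
  · intro i
    fin_cases i
    · exact ⟨c, htx, Or.inl hbc, Or.inl ⟨hsx ▸ repa, repc⟩⟩
    · exact ⟨c, hty, Or.inl hbc, Or.inr ⟨hsy ▸ repa, repc⟩⟩
  · intro p hp i hi j hj
    exfalso
    simp only [Set.mem_setOf_eq] at hi
    have hpc' : p = c := by
      fin_cases i <;> simp_all
    exact hpc (hpc' ▸ hp)
  · intro l hl i hi j hj
    exfalso
    simp only [Set.mem_setOf_eq, OutEdgeOf] at hi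
    rcases hi.2 with ⟨h1, -⟩ | ⟨h1, -⟩
    · have hla : l = a := by fin_cases i <;> simp_all
      exact hsa (hla ▸ hl)
    · have hlc : l = c := by fin_cases i <;> simp_all
      exact hsc (hlc ▸ hl)

section Walks

variable (Good : S.Edge × Bool → Prop)

/-- The step relation of safe walks in the 0-graph. -/
def WalkStep (a b : S.Edge × Bool) : Prop :=
  Good a ∧ Good b ∧ S.headN a = S.tailN b ∧ a.1 ≠ b.1

/-- chains for transitive closures -/
theorem transGen_chain {α : Type*} {r : α → α → Prop} {a b : α}
    (h : Relation.TransGen r a b) :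
    ∃ (m : ℕ) (g : ℕ → α), g 0 = a ∧ g (m + 1) = b ∧ ∀ i ≤ m, r (g i) (g (i + 1)) := by
  induction h with
  | @single b' hab =>
    refine ⟨0, fun i => if i = 0 then a else b', by simp, by simp, ?_⟩
    intro i hi
    interval_cases i
    simpa using hab
  | @tail b' c hab hbc ih =>
    obtain ⟨m, g, h0, h1, hs⟩ := ih
    refine ⟨m + 1, fun i => if i = m + 2 then c else g i, by simp [h0], by simp, ?_⟩
    intro i hi
    simp only []
    rcases Nat.lt_or_ge i (m + 1) with h | h
    · have e1 : ¬ (i = m + 2) := by omega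
      have e2 : ¬ (i + 1 = m + 2) := by omega
      simp only [e1, e2, if_false]
      exact hs i (by omega)
    · have e3 : i = m + 1 := by omega
      subst e3
      have e1 : ¬ (m + 1 = m + 2) := by omega
      simp only [e1, if_false, if_pos rfl]
      rw [h1]
      exact hbc

variable
  (HC : ∀ t, Good t → S.ConnectsAt none t.1 (S.tailN t) (S.headN t))
  (Hsync : ∀ t, Good t → ∀ l, S.sort l = .sync → S.OutEdgeOf l t.1 → S.headN t = S.nodeRep l)
  (Hparr : ∀ t, Good t → ∀ p, S.sort p = .parr → S.tgt t.1 = some p → S.headN t = p)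
  (Hdep : ∀ e, Good (e, true) → S.nodeRep (S.src e) = S.src e)

include HC Hsync Hparr Hdep in
/-- No safe cyclic walk in the 0-graph of a correct structure. -/
theorem Correct.no_walk_cycle (hC : S.Correct) :
    ∀ t, ¬ Relation.TransGen (WalkStep Good) t t := by
  classical
  intro t ht
  -- extract a periodic walk
  obtain ⟨m, g, hg0, hg1, hgs⟩ := transGen_chain ht
  have hPex : ∃ q, 0 < q ∧ ∃ f : ℕ → S.Edge × Bool,
      (∀ i, WalkStep Good (f i) (f (i + 1))) ∧ (∀ i, f (i + q) = f i) := by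
    refine ⟨m + 1, Nat.succ_pos m, fun i => g (i % (m + 1)), ?_, ?_⟩
    · intro i
      show WalkStep Good (g (i % (m + 1))) (g ((i + 1) % (m + 1)))
      have hlt : i % (m + 1) < m + 1 := Nat.mod_lt i (by omega)
      have hkey : g ((i + 1) % (m + 1)) = g (i % (m + 1) + 1) := by
        rcases Nat.lt_or_ge (i % (m + 1) + 1) (m + 1) with h | h
        · rw [succ_mod, Nat.mod_eq_of_lt h]
        · have h2 : i % (m + 1) = m := by omega
          have h3 : (i + 1) % (m + 1) = 0 := by
            rw [succ_mod, h2, Nat.mod_self]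
          rw [h3, h2, hg1, hg0]
      rw [hkey]
      exact hgs _ (Nat.lt_succ_iff.mp hlt)
    · intro i
      simp [Nat.add_mod_right]
  -- the minimal period
  obtain ⟨hp0pos, f, hfW, hfper⟩ := Nat.find_spec hPex
  set p0 := Nat.find hPex with hp0def
  have hmin : ∀ q, q < p0 → ¬ (0 < q ∧ ∃ f : ℕ → S.Edge × Bool,
      (∀ i, WalkStep Good (f i) (f (i + 1))) ∧ (∀ i, f (i + q) = f i)) :=
    fun q hq => Nat.find_min hPex hq
  clear ht hg0 hg1 hgs
  -- periodicity mod p0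
  have hmul : ∀ (f' : ℕ → S.Edge × Bool), (∀ i, f' (i + p0) = f' i) →
      ∀ i, f' i = f' (i % p0) := by
    intro f' hper i
    conv_lhs => rw [← Nat.mod_add_div i p0]
    generalize i / p0 = q
    induction q with
    | zero => simp
    | succ q ih =>
      have harith : i % p0 + p0 * (q + 1) = (i % p0 + p0 * q) + p0 := by ring
      rw [harith, hper]
      exact ih
  -- tails are injective along a period
  have notails : ∀ d, 0 < d → d < p0 →
      ∀ f' : ℕ → S.Edge × Bool, (∀ i, WalkStep Good (f' i) (f' (i + 1))) →
        S.tailN (f' d) = S.tailN (f' 0) → False := by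
    intro d
    induction d using Nat.strong_induction_on with
    | _ d IH =>
      intro hd0 hdp f' hW htls
      rcases Nat.lt_or_ge d 2 with hd1 | hd2
      · have hd1' : d = 1 := by omega
        subst hd1'
        have h1 := (hW 0).2.2.1
        rw [htls] at h1
        exact hC.connects_self (h1 ▸ HC _ (hW 0).1)
      -- d ≥ 2 : show no splice-edge-clash, then splice into a shorter period
      have hedge : (f' (d - 1)).1 ≠ (f' 0).1 := by
        intro hx
        by_cases hdir : (f' (d - 1)).2 = (f' 0).2
        · have heq : f' (d - 1) = f' 0 := Prod.ext hx hdir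
          have htl2 : S.tailN (f' (d - 1)) = S.tailN (f' 0) := by rw [heq]
          exact IH (d - 1) (by omega) (by omega) (by omega) f' hW htl2
        · have hth : S.tailN (f' (d - 1)) = S.headN (f' 0) := by
            rcases Bool.eq_false_or_eq_true (f' 0).2 with h2 | h2
            · have h3 : (f' (d - 1)).2 = false := by
                cases hb : (f' (d - 1)).2
                · rfl
                · exact absurd (hb.trans h2.symm) hdir
              rw [tailN, headN, h3, h2, if_neg (by simp), if_pos rfl, hx]
            · have h3 : (f' (d - 1)).2 = true := by
                cases hb : (f' (d - 1)).2
                · exact absurd (hb.trans h2.symm) hdir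
                · rfl
              have hgood : Good ((f' 0).1, true) := by
                have hgd := (hW (d - 1)).1
                have hval : f' (d - 1) = ((f' 0).1, true) := Prod.ext hx h3
                rwa [hval] at hgd
              rw [tailN, headN, h3, h2, if_pos rfl, if_neg (by simp), hx]
              exact (Hdep _ hgood).symm
          have hth2 : S.tailN (f' (d - 1)) = S.tailN (f' 1) := by
            rw [hth]
            exact (hW 0).2.2.1
          rcases Nat.lt_or_ge d 3 with hd3 | hd3
          · have hd2' : d = 2 := by omega
            subst hd2'
            exact ((hW 0).2.2.2 (by simpa using hx.symm)).elim
          · have hIH := IH (d - 2) (by omega) (by omega) (by omega)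
              (fun i => f' (i + 1)) (fun i => by
                have hx1 := hW (i + 1)
                exact hx1)
            apply hIH
            show S.tailN (f' (d - 2 + 1)) = S.tailN (f' (0 + 1))
            rw [show d - 2 + 1 = d - 1 by omega]
            simpa using hth2
      apply hmin d hdp
      refine ⟨hd0, fun i => f' (i % d), ?_, fun i => by simp [Nat.add_mod_right]⟩
      intro i
      show WalkStep Good (f' (i % d)) (f' ((i + 1) % d))
      have hlt := Nat.mod_lt i hd0
      rcases Nat.lt_or_ge (i % d + 1) d with h | h
      · have hkey : (i + 1) % d = i % d + 1 := by
          rw [succ_mod, Nat.mod_eq_of_lt h]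
        rw [hkey]
        exact hW _
      · have h2 : i % d = d - 1 := by omega
        have h3 : (i + 1) % d = 0 := by
          rw [succ_mod, h2, Nat.sub_add_cancel hd0, Nat.mod_self]
        rw [h3, h2]
        have hWd := hW (d - 1)
        rw [show d - 1 + 1 = d by omega] at hWd
        exact ⟨hWd.1, (hW 0).1, by rw [hWd.2.2.1, htls], hedge⟩
  -- tails injective
  have hinj : ∀ i j, i < p0 → j < p0 → S.tailN (f i) = S.tailN (f j) → i = j := by
    intro i j hi hj hij
    rcases Nat.lt_trichotomy i j with h | h | h
    · exfalso
      apply notails (j - i) (by omega) (by omega) (fun k => f (k + i))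
        (fun k => by
          have hh := hfW (k + i)
          rwa [show k + i + 1 = k + 1 + i by ring] at hh)
      show S.tailN (f (j - i + i)) = S.tailN (f (0 + i))
      rw [show j - i + i = j by omega, Nat.zero_add]
      exact hij.symm
    · exact h
    · exfalso
      apply notails (i - j) (by omega) (by omega) (fun k => f (k + j))
        (fun k => by
          have hh := hfW (k + j)
          rwa [show k + j + 1 = k + 1 + j by ring] at hh)
      show S.tailN (f (i - j + j)) = S.tailN (f (0 + j))
      rw [show i - j + j = i by omega, Nat.zero_add]
      exact hij
  -- build the switching cycle
  apply hC none
  set k := p0 - 1 with hkdef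
  have hkp : k + 1 = p0 := by omega
  have hvlt : ∀ i : Fin (k + 1), i.val < p0 := fun i => hkp ▸ i.isLt
  have hfeq : ∀ i : Fin (k + 1), f ((i + 1).val) = f (i.val + 1) := by
    intro i
    have h4 : (i + 1 : Fin (k + 1)).val = (i.val + 1) % (k + 1) := by
      rw [Fin.val_add, Fin.val_one', Nat.add_mod i.val 1 (k + 1),
        Nat.mod_eq_of_lt i.isLt]
    have h5 : ∀ a : ℕ, a % (k + 1) = a % p0 := fun a => by rw [hkp]
    rw [h4, h5]
    exact (hmul f hfper (i.val + 1)).symm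
  have hhead : ∀ i : Fin (k + 1), S.headN (f i.val) = S.tailN (f ((i + 1).val)) := by
    intro i
    rw [hfeq i]
    exact (hfW i.val).2.2.1
  refine ⟨k, fun i => S.tailN (f i.val), fun i => (f i.val).1, ?_, ?_, ?_, ?_, ?_⟩
  · intro i j h
    exact Fin.ext (hinj i.val j.val (hvlt i) (hvlt j) h)
  · intro i j h
    have h : (f i.val).1 = (f j.val).1 := h
    by_cases hdir : (f i.val).2 = (f j.val).2
    · exact Fin.ext (hinj i.val j.val (hvlt i) (hvlt j)
        (by rw [Prod.ext h hdir]))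
    · exfalso
      have hth : S.tailN (f j.val) = S.headN (f i.val) := by
        rcases Bool.eq_false_or_eq_true (f i.val).2 with h2 | h2
        · have h3 : (f j.val).2 = false := by
            cases hb : (f j.val).2
            · rfl
            · exact absurd (h2.trans hb.symm) hdir
          rw [tailN, headN, h3, h2, if_neg (by simp), if_pos rfl, ← h]
        · have h3 : (f j.val).2 = true := by
            cases hb : (f j.val).2
            · exact absurd (h2.trans hb.symm) hdir
            · rfl
          have hgood : Good ((f i.val).1, true) := by
            have hgd := (hfW j.val).1
            have hval : f j.val = ((f i.val).1, true) := Prod.ext h.symm h3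
            rwa [hval] at hgd
          rw [tailN, headN, h3, h2, if_pos rfl, if_neg (by simp), ← h]
          exact (Hdep _ hgood).symm
      rw [hhead i] at hth
      have hji : j = i + 1 :=
        Fin.ext (hinj j.val ((i+1)).val (hvlt j) (hvlt (i+1)) hth)
      apply (hfW i.val).2.2.2
      rw [← hfeq i, ← hji, h]
  · intro i
    have hcon := HC (f i.val) (hfW i.val).1
    rw [hhead i] at hcon
    exact hcon
  · intro p hp
    intro i hi j hj
    simp only [Set.mem_setOf_eq] at hi hj
    have h1 : S.headN (f i.val) = p := Hparr _ (hfW i.val).1 p hp hi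
    have h2 : S.headN (f j.val) = p := Hparr _ (hfW j.val).1 p hp hj
    rw [hhead i] at h1
    rw [hhead j] at h2
    have : i + 1 = j + 1 :=
      Fin.ext (hinj _ _ (hvlt (i+1)) (hvlt (j+1)) (h1.trans h2.symm))
    exact add_right_cancel this
  · intro l hl
    intro i hi j hj
    simp only [Set.mem_setOf_eq] at hi hj
    have h1 : S.headN (f i.val) = S.nodeRep l := Hsync _ (hfW i.val).1 l hl hi
    have h2 : S.headN (f j.val) = S.nodeRep l := Hsync _ (hfW j.val).1 l hl hj
    rw [hhead i] at h1
    rw [hhead j] at h2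
    have : i + 1 = j + 1 :=
      Fin.ext (hinj _ _ (hvlt (i+1)) (hvlt (j+1)) (h1.trans h2.symm))
    exact add_right_cancel this

end Walks

end Struct

end Cycles


section Constructions

/-- Binding a `pmap`ed option back along the projection recovers the option. -/
theorem pmap_bind_eq {α : Type*} {p : α → Prop} (o : Option α) (H : ∀ a ∈ o, p a) :
    (Option.pmap (fun a h => (⟨a, h⟩ : Subtype p)) o H).bind
      (fun s => some s.val) = o := by
  cases o <;> rfl

namespace Struct

variable {R : Struct}

theorem sort_ne {s s' : LinkSort} {n m : R.Node} (hn : R.sort n = s) (hm : R.sort m = s')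
    (h : s ≠ s') : n ≠ m := by
  intro h2
  rw [h2, hm] at hn
  exact h hn.symm

/-- The `ax/cut` reduction step applies. -/
theorem red_axcut (hWF : R.WF) (hC : R.Correct) {a c : R.Node} {v u q : R.Edge}
    (ha : R.sort a = .ax) (hc : R.sort c = .cut)
    (hba : R.box a = none) (hbc : R.box c = none)
    (hvu : v ≠ u) (hvq : v ≠ q)
    (hconc : R.concls a = {v, u}) (hprem : R.prems c = {v, q}) :
    ∃ Q, Step R Q := by
  classical
  have hac : a ≠ c := sort_ne ha hc (by decide)
  have hsrc_a : ∀ x, R.src x = a → x = v ∨ x = u := by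
    intro x hx
    have : x ∈ R.concls a := mem_concls.mpr hx
    rw [hconc] at this
    simpa using this
  have htgt_c : ∀ x, R.tgt x = some c → x = v ∨ x = q := by
    intro x hx
    have : x ∈ R.prems c := mem_prems.mpr hx
    rw [hprem] at this
    simpa using this
  have hsrc_v : R.src v = a := mem_concls.mp (by rw [hconc]; simp)
  have hsrc_u : R.src u = a := mem_concls.mp (by rw [hconc]; simp)
  have htgt_v : R.tgt v = some c := mem_prems.mp (by rw [hprem]; simp)
  have htgt_q : R.tgt q = some c := mem_prems.mp (by rw [hprem]; simp)
  have hprem_a : ∀ x, R.tgt x = some a → False :=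
    fun x hx => hWF.no_prems_sorts (Or.inl ha) hx
  have hconcl_c : ∀ x, R.src x = c → False := fun x hx => hWF.not_src_cut hc hx
  have huq : u ≠ q := by
    intro h
    subst h
    exact hC.no_double_edge hvu hac hsrc_v hsrc_u htgt_v htgt_q hba hbc
      (by rw [ha]; decide) (by rw [hc]; decide) (by rw [hc]; decide)
  have htgtu_ne : ∀ n, R.tgt u = some n → n ≠ a ∧ n ≠ c := by
    intro n h
    constructor
    · intro h2; exact hprem_a u (h2 ▸ h)
    · intro h2
      rcases htgt_c u (h2 ▸ h) with h3 | h3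
      · exact hvu h3.symm
      · exact huq h3
  have hbox_ne : ∀ m b, R.box m = some b → b ≠ a ∧ b ≠ c := by
    intro m b hb
    have hs := hWF.box_sort hb
    exact ⟨sort_ne hs ha (by decide), sort_ne hs hc (by decide)⟩
  refine ⟨{
    Edge := {x : R.Edge // x ≠ v ∧ x ≠ u}
    Node := {n : R.Node // n ≠ a ∧ n ≠ c}
    edgeFintype := inferInstance
    nodeFintype := inferInstance
    edgeDecEq := inferInstance
    nodeDecEq := inferInstance
    typ := fun x => R.typ x.val
    sort := fun n => R.sort n.val
    src := fun x => ⟨R.src x.val, by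
      constructor
      · intro h
        rcases hsrc_a _ h with h2 | h2
        · exact x.2.1 h2
        · exact x.2.2 h2
      · intro h; exact hconcl_c _ h⟩
    tgt := fun x =>
      if hx : R.tgt x.val = some c then
        Option.pmap (fun n hn => ⟨n, hn⟩) (R.tgt u) (fun n hn => htgtu_ne n hn)
      else
        Option.pmap (fun n hn => ⟨n, hn⟩) (R.tgt x.val)
          (fun n hn => ⟨fun h2 => (hprem_a _ (h2 ▸ hn)).elim, fun h2 => hx (h2 ▸ hn)⟩)
    pIdx := fun x => if R.tgt x.val = some c then R.pIdx u else R.pIdx x.val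
    cIdx := fun x => R.cIdx x.val
    box := fun n =>
      Option.pmap (fun b hb => ⟨b, hb⟩) (R.box n.val) (fun b hb => hbox_ne n.val b hb)
    boxes := fun n => (R.boxes n.val).subtype _ }, ?_⟩
  refine Or.inl ⟨a, c, v, u, q, ha, hc, hba, hbc, hvu, hvq, huq, hconc, hprem,
    fun n => some n.val, fun x => some x.val, ?_, ?_, ?_, ?_, ⟨?_, ?_⟩, ?_⟩
  · intro n h; exact nomatch h
  · intro x h; exact nomatch h
  · refine ⟨?_, ?_, ?_⟩
    · intro n n' b h h'
      exact Subtype.ext ((Option.some.inj h).trans (Option.some.inj h').symm)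
    · intro n b h
      cases Option.some.inj h
      exact n.2
    · intro b hb
      exact ⟨⟨b, hb⟩, rfl⟩
  · refine ⟨?_, ?_, ?_⟩
    · intro n n' b h h'
      exact Subtype.ext ((Option.some.inj h).trans (Option.some.inj h').symm)
    · intro n b h
      cases Option.some.inj h
      exact n.2
    · intro b hb
      exact ⟨⟨b, hb⟩, rfl⟩
  · -- edge agreement off q
    intro x y hxy hynq
    cases Option.some.inj hxy
    have hxq : ¬ (R.tgt x.val = some c) := by
      intro h2
      rcases htgt_c _ h2 with h3 | h3
      · exact x.2.1 h3
      · exact hynq (by simpa using h3)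
    refine ⟨rfl, rfl, ?_, ?_, rfl⟩
    · show (if hx : R.tgt x.val = some c then _ else _ : Option _).bind _ = _
      rw [dif_neg hxq]
      exact pmap_bind_eq _ _
    · show (if R.tgt x.val = some c then R.pIdx u else R.pIdx x.val) = R.pIdx x.val
      rw [if_neg hxq]
  · -- node agreement
    intro n m hnm _
    cases Option.some.inj hnm
    refine ⟨rfl, pmap_bind_eq _ _, ?_⟩
    intro b b' hbb'
    cases Option.some.inj hbb'
    exact Finset.mem_subtype
  · -- the merged edge q
    intro x hx
    cases Option.some.inj hx
    refine ⟨rfl, rfl, ?_, ?_, rfl⟩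
    · show (if hx : R.tgt x.val = some c then _ else _ : Option _).bind _ = _
      rw [dif_pos htgt_q]
      exact pmap_bind_eq _ _
    · show (if R.tgt x.val = some c then R.pIdx u else R.pIdx x.val) = R.pIdx u
      rw [if_pos htgt_q]

theorem Correct.no_self_edge (hC : R.Correct) {e : R.Edge} {n : R.Node}
    (h1 : R.src e = n) (h2 : R.tgt e = some n) (hb : R.box n = none) : False :=
  hC.connects_self (u := n)
    ⟨n, h2, Or.inl hb, Or.inl ⟨Or.inl ⟨by rw [h1]; exact hb, h1.symm⟩, Or.inl ⟨hb, rfl⟩⟩⟩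

theorem pmap_eq_none {α β : Type*} {p : α → Prop} (f : ∀ a, p a → β) {o : Option α}
    (H : ∀ a ∈ o, p a) (h : o = none) : Option.pmap f o H = none := by
  subst h; rfl

theorem bind_some_eq {α : Type*} (o : Option α) : o.bind (fun a => some a) = o := by
  cases o <;> rfl

/-- The `one/⊥` reduction step applies. -/
theorem red_onebot (hWF : R.WF) {c n1 b : R.Node} {o k : R.Edge}
    (hc : R.sort c = .cut) (hn1 : R.sort n1 = .one) (hb : R.sort b = .bot)
    (hbc : R.box c = none) (hbn1 : R.box n1 = none) (hbb : R.box b = none)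
    (hok : o ≠ k) (hprem : R.prems c = {o, k})
    (hso : R.src o = n1) (hsk : R.src k = b) :
    ∃ Q, Step R Q := by
  classical
  have hconc1 : R.concls n1 = {o} := by
    obtain ⟨-, e, he, -⟩ := hWF.one n1 hn1
    have : o ∈ R.concls n1 := mem_concls.mpr hso
    rw [he] at this ⊢
    rw [Finset.mem_singleton] at this
    rw [this]
  have hconcb : R.concls b = {k} := by
    obtain ⟨-, e, he, -⟩ := hWF.bot b hb
    have : k ∈ R.concls b := mem_concls.mpr hsk
    rw [he] at this ⊢
    rw [Finset.mem_singleton] at this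
    rw [this]
  have hsrc_ne : ∀ x : R.Edge, x ≠ o → x ≠ k →
      R.src x ≠ c ∧ R.src x ≠ n1 ∧ R.src x ≠ b := by
    intro x hxo hxk
    refine ⟨fun h => hWF.not_src_cut hc h, fun h => ?_, fun h => ?_⟩
    · have : x ∈ R.concls n1 := mem_concls.mpr h
      rw [hconc1, Finset.mem_singleton] at this
      exact hxo this
    · have : x ∈ R.concls b := mem_concls.mpr h
      rw [hconcb, Finset.mem_singleton] at this
      exact hxk this
  have htgt_ne : ∀ (x : R.Edge), x ≠ o → x ≠ k → ∀ n, R.tgt x = some n →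
      n ≠ c ∧ n ≠ n1 ∧ n ≠ b := by
    intro x hxo hxk n htn
    refine ⟨fun h => ?_, fun h => hWF.no_prems_sorts (Or.inr (Or.inl hn1)) (h ▸ htn),
      fun h => hWF.no_prems_sorts (Or.inr (Or.inr hb)) (h ▸ htn)⟩
    have : x ∈ R.prems c := mem_prems.mpr (h ▸ htn)
    rw [hprem] at this
    simp only [Finset.mem_insert, Finset.mem_singleton] at this
    rcases this with h | h
    · exact hxo h
    · exact hxk h
  have hbox_ne : ∀ m b0, R.box m = some b0 → b0 ≠ c ∧ b0 ≠ n1 := by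
    intro m b0 hb0
    have hs := hWF.box_sort hb0
    exact ⟨sort_ne hs hc (by decide), sort_ne hs hn1 (by decide)⟩
  refine ⟨{
    Edge := {x : R.Edge // x ≠ o ∧ x ≠ k}
    Node := {n : R.Node // n ≠ c ∧ n ≠ n1 ∧ n ≠ b}
    edgeFintype := inferInstance
    nodeFintype := inferInstance
    edgeDecEq := inferInstance
    nodeDecEq := inferInstance
    typ := fun x => R.typ x.val
    sort := fun n => R.sort n.val
    src := fun x => ⟨R.src x.val, hsrc_ne x.val x.2.1 x.2.2⟩
    tgt := fun x => Option.pmap (fun n hn => ⟨n, hn⟩) (R.tgt x.val)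
      (fun n hn => htgt_ne x.val x.2.1 x.2.2 n hn)
    pIdx := fun x => R.pIdx x.val
    cIdx := fun x => R.cIdx x.val
    box := fun n =>
      if hbx : R.box n.val = some b then none
      else Option.pmap (fun b0 hb0 => ⟨b0, hb0⟩) (R.box n.val)
        (fun b0 hb0 => ⟨(hbox_ne n.val b0 hb0).1, (hbox_ne n.val b0 hb0).2,
          fun h => hbx (h ▸ hb0)⟩)
    boxes := fun n => ((R.boxes n.val).erase b).subtype _ }, ?_⟩
  refine Or.inr (Or.inr (Or.inr ⟨c, n1, b, o, k, hc, hn1, hb, hbc, hbn1, hbb, hok,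
    hprem, hso, hsk, fun n => some n.val, fun x => some x.val, ?_, ?_, ?_, ?_, ?_, ?_⟩))
  · intro n h; exact nomatch h
  · intro x h; exact nomatch h
  · refine ⟨?_, ?_, ?_⟩
    · intro n n' b0 h h'
      exact Subtype.ext ((Option.some.inj h).trans (Option.some.inj h').symm)
    · intro n b0 h
      cases Option.some.inj h
      exact n.2
    · intro b0 hb0
      exact ⟨⟨b0, hb0⟩, rfl⟩
  · refine ⟨?_, ?_, ?_⟩
    · intro n n' b0 h h'
      exact Subtype.ext ((Option.some.inj h).trans (Option.some.inj h').symm)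
    · intro n b0 h
      cases Option.some.inj h
      exact n.2
    · intro b0 hb0
      exact ⟨⟨b0, hb0⟩, rfl⟩
  · intro x e hxe
    cases Option.some.inj hxe
    exact ⟨rfl, rfl, pmap_bind_eq _ _, rfl, rfl⟩
  · intro n m hnm
    cases Option.some.inj hnm
    refine ⟨rfl, ?_, ?_, ?_⟩
    · intro b0 b0' hbb'
      cases Option.some.inj hbb'
      rw [Finset.mem_subtype, Finset.mem_erase]
      exact And.comm
    · intro hmb
      show (if _ : R.box n.val = some b then none else _) = none
      rw [dif_pos hmb]
    · intro hmb
      show ((if _ : R.box n.val = some b then none else _ : Option _).bind _) = _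
      rw [dif_neg hmb]
      exact pmap_bind_eq _ _

/-- The `sync/cut` commutation step applies. -/
theorem red_synccut (hWF : R.WF) {l c : R.Node} {d' q : R.Edge}
    (hl : R.sort l = .sync) (hc : R.sort c = .cut)
    (hbl : R.box l = none) (hbc : R.box c = none)
    (hneg : (R.typ d').Negative) (hsd' : R.src d' = l) (htd' : R.tgt d' = some c)
    (hd'q : d' ≠ q) (hprem : R.prems c = {d', q}) :
    ∃ Q, Step R Q := by
  classical
  obtain ⟨d, htd, hpd, htypd, -⟩ := hWF.sync_concl_prem hl hsd'
  have hlc : l ≠ c := sort_ne hl hc (by decide)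
  have hdq : d ≠ q := by
    intro h
    subst h
    have : d ∈ R.prems c := by rw [hprem]; simp
    rw [mem_prems] at this
    rw [this] at htd
    exact hlc (Option.some.inj htd).symm
  have hdd' : d ≠ d' := by
    intro h
    rw [h, htd'] at htd
    exact hlc (Option.some.inj htd).symm
  obtain ⟨j, j2, -, hfresh⟩ := R.freshIdx
  refine ⟨{
    Edge := {e : R.Edge // e ≠ d'} ⊕ Unit
    Node := R.Node
    edgeFintype := inferInstance
    nodeFintype := inferInstance
    edgeDecEq := inferInstance
    nodeDecEq := inferInstance
    typ := fun x => Sum.elim (fun e => R.typ e.val) (fun _ => R.typ q) x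
    sort := R.sort
    src := fun x => Sum.elim (fun e => R.src e.val) (fun _ => l) x
    tgt := fun x => Sum.elim
      (fun e => if e.val = d then some c else if e.val = q then some l else R.tgt e.val)
      (fun _ => some c) x
    pIdx := fun x => Sum.elim
      (fun e => if e.val = d then R.pIdx d' else if e.val = q then j else R.pIdx e.val)
      (fun _ => R.pIdx q) x
    cIdx := fun x => Sum.elim (fun e => R.cIdx e.val) (fun _ => j) x
    box := R.box
    boxes := R.boxes }, ?_⟩
  refine Or.inr (Or.inr (Or.inl (Or.inr (Or.inr (Or.inl
    ⟨l, c, d, d', q, j, hl, hc, hbl, hbc, hneg, hsd', htd', htd, hpd,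
     hd'q, hdq, hdd', hprem, fun e he => (hfresh e).1, fun e he => (hfresh e).2.2.1,
     fun n => some n, Sum.elim (fun e => some e.val) (fun _ => none),
     l, c, Sum.inr (), ?_, ?_, ?_, rfl, rfl, rfl, ?_, ⟨?_, ?_⟩, ?_, ?_, ?_⟩)))))
  · intro n h; exact nomatch h
  · exact ⟨fun n n' b h h' => (Option.some.inj h).trans (Option.some.inj h').symm,
      fun n b h => trivial, fun b hb => ⟨b, rfl⟩⟩
  · refine ⟨?_, ?_, ?_⟩
    · intro x x' e h h'
      match x, x' with
      | Sum.inl y, Sum.inl y' =>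
        exact congrArg Sum.inl
          (Subtype.ext ((Option.some.inj h).trans (Option.some.inj h').symm))
      | Sum.inr _, _ => exact nomatch h
      | Sum.inl y, Sum.inr _ => exact nomatch h'
    · intro x e h
      match x with
      | Sum.inl y =>
        cases Option.some.inj h
        exact y.2
      | Sum.inr _ => exact nomatch h
    · intro e he
      exact ⟨Sum.inl ⟨e, he⟩, rfl⟩
  · intro e he
    match e with
    | Sum.inl y => exact nomatch he
    | Sum.inr _ => rfl
  · -- edge agreement off {d, q}
    intro x y hxy hynq
    match x with
    | Sum.inl z =>
      cases Option.some.inj hxy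
      have hyd : z.val ≠ d := fun h => hynq (by rw [h]; exact Or.inl rfl)
      have hyq : z.val ≠ q := fun h => hynq (by rw [h]; exact Or.inr rfl)
      refine ⟨rfl, rfl, ?_, ?_, rfl⟩
      · show (if z.val = d then some c else if z.val = q then some l
            else R.tgt z.val).bind (fun n => some n) = R.tgt z.val
        rw [if_neg hyd, if_neg hyq]
        exact bind_some_eq _
      · show (if z.val = d then R.pIdx d' else if z.val = q then j
            else R.pIdx z.val) = R.pIdx z.val
        rw [if_neg hyd, if_neg hyq]
    | Sum.inr _ => exact nomatch hxy
  · -- node agreement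
    intro n m hnm _
    cases Option.some.inj hnm
    exact ⟨rfl, bind_some_eq _, fun b b' hbb' => by cases Option.some.inj hbb'; rfl⟩
  · -- the edge d
    intro e he
    match e with
    | Sum.inl z =>
      have hzd : z.val = d := Option.some.inj he
      refine ⟨congrArg R.typ hzd, congrArg (fun x => some (R.src x)) hzd,
        congrArg R.cIdx hzd, ?_, ?_⟩
      · show (if z.val = d then some c else if z.val = q then some l
            else R.tgt z.val) = some c
        rw [if_pos hzd]
      · show (if z.val = d then R.pIdx d' else if z.val = q then j
            else R.pIdx z.val) = R.pIdx d'
        rw [if_pos hzd]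
    | Sum.inr _ => exact nomatch he
  · -- the edge q
    intro e he
    match e with
    | Sum.inl z =>
      have hzq : z.val = q := Option.some.inj he
      refine ⟨congrArg R.typ hzq, congrArg (fun x => some (R.src x)) hzq,
        congrArg R.cIdx hzq, ?_, ?_⟩
      · show (if z.val = d then some c else if z.val = q then some l
            else R.tgt z.val) = some l
        rw [if_neg (fun h => hdq (h.symm.trans hzq)), if_pos hzq]
      · show (if z.val = d then R.pIdx d' else if z.val = q then j
            else R.pIdx z.val) = j
        rw [if_neg (fun h => hdq (h.symm.trans hzq)), if_pos hzq]
    | Sum.inr _ => exact nomatch he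
  · -- the fresh edge q'
    exact ⟨rfl, rfl, rfl, rfl, rfl⟩


theorem pmap_eq_some {α β : Type*} {p : α → Prop} (f : ∀ a, p a → β) {o : Option α}
    (H : ∀ a ∈ o, p a) {a : α} (h : o = some a) :
    Option.pmap f o H = some (f a (H a h)) := by
  subst h; rfl

theorem pmap_bind_dite {α : Type*} {pp : α → Prop} [DecidableEq α] (t0 : α)
    (o : Option α) (H : ∀ a ∈ o, pp a) (hne : ∀ a ∈ o, a ≠ t0) :
    (Option.pmap (fun a h => (⟨a, h⟩ : Subtype pp)) o H).bind
      (fun s => if h : s.val = t0 then none else some s.val) = o := by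
  cases o with
  | none => rfl
  | some a =>
    show (if h : a = t0 then none else some a) = some a
    rw [dif_neg (hne a rfl)]

/-- The `sync/ax` commutation step applies. -/
theorem red_syncax (hWF : R.WF) {l a : R.Node} {u : R.Edge}
    (hl : R.sort l = .sync) (ha : R.sort a = .ax)
    (hbl : R.box l = none) (hba : R.box a = none)
    (hpos : (R.typ u).Positive) (hsu : R.src u = a) (htu : R.tgt u = some l) :
    ∃ Q, Step R Q := by
  classical
  have hla : l ≠ a := sort_ne hl ha (by decide)
  obtain ⟨-, e0, f0, hef, hcon, -⟩ := hWF.ax a ha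
  have hu_mem : u ∈ R.concls a := mem_concls.mpr hsu
  rw [hcon] at hu_mem
  simp only [Finset.mem_insert, Finset.mem_singleton] at hu_mem
  obtain ⟨v, huv, hconc⟩ : ∃ v, u ≠ v ∧ R.concls a = {u, v} := by
    rcases hu_mem with rfl | rfl
    · exact ⟨f0, hef, hcon⟩
    · exact ⟨e0, fun h => hef h.symm, by rw [hcon, Finset.pair_comm]⟩
  have hsv : R.src v = a := mem_concls.mp (by rw [hconc]; simp)
  obtain ⟨u', hsu', hcu', -, -⟩ := hWF.sync_prem_concl hl htu
  have hu'u : u' ≠ u := fun h => hla (by rw [← hsu', h, hsu])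
  have hu'v : u' ≠ v := fun h => hla (by rw [← hsu', h, hsv])
  obtain ⟨j, j2, -, hfresh⟩ := R.freshIdx
  refine ⟨{
    Edge := {e : R.Edge // e ≠ u} ⊕ Unit
    Node := R.Node
    edgeFintype := inferInstance
    nodeFintype := inferInstance
    edgeDecEq := inferInstance
    nodeDecEq := inferInstance
    typ := fun x => Sum.elim (fun e => R.typ e.val) (fun _ => R.typ v) x
    sort := R.sort
    src := fun x => Sum.elim
      (fun e => if e.val = u' then a else R.src e.val) (fun _ => l) x
    tgt := fun x => Sum.elim
      (fun e => if e.val = v then some l else R.tgt e.val) (fun _ => R.tgt v) x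
    pIdx := fun x => Sum.elim
      (fun e => if e.val = v then j else R.pIdx e.val) (fun _ => R.pIdx v) x
    cIdx := fun x => Sum.elim
      (fun e => if e.val = u' then R.cIdx u else R.cIdx e.val) (fun _ => j) x
    box := R.box
    boxes := R.boxes }, ?_⟩
  refine Or.inr (Or.inr (Or.inl (Or.inr (Or.inl
    ⟨l, a, u, u', v, j, hl, ha, hbl, hba, hpos, huv, hconc, htu, hsu', hcu',
     hu'u, hu'v, fun e he => (hfresh e).1, fun e he => (hfresh e).2.2.1,
     fun n => some n, Sum.elim (fun e => some e.val) (fun _ => none),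
     l, a, Sum.inr (), ?_, ?_, ?_, rfl, rfl, rfl, ?_, ⟨?_, ?_⟩, ?_, ?_, ?_⟩))))
  · intro n h; exact nomatch h
  · exact ⟨fun n n' b h h' => (Option.some.inj h).trans (Option.some.inj h').symm,
      fun n b h => trivial, fun b hb => ⟨b, rfl⟩⟩
  · refine ⟨?_, ?_, ?_⟩
    · intro x x' e h h'
      match x, x' with
      | Sum.inl y, Sum.inl y' =>
        exact congrArg Sum.inl
          (Subtype.ext ((Option.some.inj h).trans (Option.some.inj h').symm))
      | Sum.inr _, _ => exact nomatch h
      | Sum.inl y, Sum.inr _ => exact nomatch h'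
    · intro x e h
      match x with
      | Sum.inl y =>
        cases Option.some.inj h
        exact y.2
      | Sum.inr _ => exact nomatch h
    · intro e he
      exact ⟨Sum.inl ⟨e, he⟩, rfl⟩
  · intro e he
    match e with
    | Sum.inl y => exact nomatch he
    | Sum.inr _ => rfl
  · -- edge agreement off {u', v}
    intro x y hxy hynq
    match x with
    | Sum.inl z =>
      cases Option.some.inj hxy
      have hyu' : z.val ≠ u' := fun h => hynq (by rw [h]; exact Or.inl rfl)
      have hyv : z.val ≠ v := fun h => hynq (by rw [h]; exact Or.inr rfl)
      refine ⟨rfl, ?_, ?_, ?_, ?_⟩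
      · show some (if z.val = u' then a else R.src z.val) = some (R.src z.val)
        rw [if_neg hyu']
      · show (if z.val = v then some l else R.tgt z.val).bind
          (fun n => some n) = R.tgt z.val
        rw [if_neg hyv]
        exact bind_some_eq _
      · show (if z.val = v then j else R.pIdx z.val) = R.pIdx z.val
        rw [if_neg hyv]
      · show (if z.val = u' then R.cIdx u else R.cIdx z.val) = R.cIdx z.val
        rw [if_neg hyu']
    | Sum.inr _ => exact nomatch hxy
  · -- node agreement
    intro n m hnm _
    cases Option.some.inj hnm
    exact ⟨rfl, bind_some_eq _, fun b b' hbb' => by cases Option.some.inj hbb'; rfl⟩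
  · -- the edge u'
    intro e he
    match e with
    | Sum.inl z =>
      have hz : z.val = u' := Option.some.inj he
      refine ⟨congrArg R.typ hz, ?_, ?_, ?_, ?_⟩
      · show (if z.val = u' then a else R.src z.val) = a
        rw [if_pos hz]
      · show (if z.val = u' then R.cIdx u else R.cIdx z.val) = R.cIdx u
        rw [if_pos hz]
      · show (if z.val = v then some l else R.tgt z.val).bind
          (fun n => some n) = R.tgt u'
        rw [if_neg (fun h => hu'v (hz.symm.trans h)), hz]
        exact bind_some_eq _
      · show (if z.val = v then j else R.pIdx z.val) = R.pIdx u'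
        rw [if_neg (fun h => hu'v (hz.symm.trans h)), hz]
    | Sum.inr _ => exact nomatch he
  · -- the edge v
    intro e he
    match e with
    | Sum.inl z =>
      have hz : z.val = v := Option.some.inj he
      refine ⟨congrArg R.typ hz, ?_, ?_, ?_, ?_⟩
      · show (if z.val = u' then a else R.src z.val) = a
        rw [if_neg (fun h => hu'v (h.symm.trans hz)), hz, hsv]
      · show (if z.val = u' then R.cIdx u else R.cIdx z.val) = R.cIdx v
        rw [if_neg (fun h => hu'v (h.symm.trans hz)), hz]
      · show (if z.val = v then some l else R.tgt z.val) = some l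
        rw [if_pos hz]
      · show (if z.val = v then j else R.pIdx z.val) = j
        rw [if_pos hz]
    | Sum.inr _ => exact nomatch he
  · -- the fresh edge v'
    exact ⟨rfl, rfl, rfl, bind_some_eq _, rfl⟩

/-- The `sync`-multiplicative commutation step applies. -/
theorem red_syncmult (hWF : R.WF) {l m : R.Node} {z : R.Edge}
    (hl : R.sort l = .sync) (hm : R.sort m = .tens ∨ R.sort m = .parr)
    (hbl : R.box l = none) (hbm : R.box m = none)
    (hsz : R.src z = m) (htz : R.tgt z = some l) :
    ∃ Q, Step R Q := by
  classical
  have hlm : l ≠ m := by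
    rcases hm with hm | hm
    · exact sort_ne hl hm (by decide)
    · exact sort_ne hl hm (by decide)
  obtain ⟨w, hsw, hcw, htypw, -⟩ := hWF.sync_prem_concl hl htz
  obtain ⟨x, y, hxy, hprm, hpx, hpy, hconcm, htypg⟩ :
      ∃ x y, x ≠ y ∧ R.prems m = {x, y} ∧ R.pIdx x = 0 ∧ R.pIdx y = 1 ∧
        R.concls m = {z} ∧
        (R.typ z = .tens (R.typ x) (R.typ y) ∨ R.typ z = .parr (R.typ x) (R.typ y)) := by
    rcases hm with hm | hm
    · obtain ⟨x, y, g, hxy, hprm, hpx, hpy, hconcm, htypg⟩ := hWF.tens m hm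
      have : z ∈ R.concls m := mem_concls.mpr hsz
      rw [hconcm, Finset.mem_singleton] at this
      subst this
      exact ⟨x, y, hxy, hprm, hpx, hpy, hconcm, Or.inl htypg⟩
    · obtain ⟨x, y, g, hxy, hprm, hpx, hpy, hconcm, htypg⟩ := hWF.parr m hm
      have : z ∈ R.concls m := mem_concls.mpr hsz
      rw [hconcm, Finset.mem_singleton] at this
      subst this
      exact ⟨x, y, hxy, hprm, hpx, hpy, hconcm, Or.inr htypg⟩
  have htx : R.tgt x = some m := mem_prems.mp (by rw [hprm]; simp)
  have hty : R.tgt y = some m := mem_prems.mp (by rw [hprm]; simp)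
  have hxz : x ≠ z := by
    intro h
    rw [h, htz] at htx
    exact hlm (Option.some.inj htx)
  have hyz : y ≠ z := by
    intro h
    rw [h, htz] at hty
    exact hlm (Option.some.inj hty)
  have hwx : w ≠ x := by
    intro h
    rw [h] at htypw
    rcases htypg with hg | hg <;> rw [hg] at htypw
    · exact Formula.ne_tens_self _ _ htypw.symm
    · exact Formula.ne_parr_self _ _ htypw.symm
  have hwy : w ≠ y := by
    intro h
    rw [h] at htypw
    rcases htypg with hg | hg <;> rw [hg] at htypw
    · exact Formula.ne_tens_self' _ _ htypw.symm
    · exact Formula.ne_parr_self' _ _ htypw.symm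
  have hwz : w ≠ z := fun h => hlm (by rw [← hsw, h, hsz])
  obtain ⟨i1, i2, hi12, hfresh⟩ := R.freshIdx
  refine ⟨{
    Edge := {e : R.Edge // e ≠ z} ⊕ Bool
    Node := R.Node
    edgeFintype := inferInstance
    nodeFintype := inferInstance
    edgeDecEq := inferInstance
    nodeDecEq := inferInstance
    typ := fun x0 => Sum.elim (fun e => R.typ e.val)
      (fun b => if b then R.typ x else R.typ y) x0
    sort := R.sort
    src := fun x0 => Sum.elim
      (fun e => if e.val = w then m else R.src e.val) (fun _ => l) x0
    tgt := fun x0 => Sum.elim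
      (fun e => if e.val = x ∨ e.val = y then some l else R.tgt e.val)
      (fun _ => some m) x0
    pIdx := fun x0 => Sum.elim
      (fun e => if e.val = x then i1 else if e.val = y then i2 else R.pIdx e.val)
      (fun b => if b then 0 else 1) x0
    cIdx := fun x0 => Sum.elim (fun e => R.cIdx e.val)
      (fun b => if b then i1 else i2) x0
    box := R.box
    boxes := R.boxes }, ?_⟩
  refine Or.inr (Or.inr (Or.inl (Or.inl
    ⟨l, m, z, w, x, y, i1, i2, hl, hm, hbl, hbm, hsz, htz, hsw, hcw,
     hxy, hprm, hpx, hpy, hi12,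
     fun e he => ⟨(hfresh e).1, (hfresh e).2.1⟩,
     fun e he => ⟨(hfresh e).2.2.1, (hfresh e).2.2.2⟩,
     fun n => some n, Sum.elim (fun e => some e.val) (fun _ => none),
     l, m, Sum.inr true, Sum.inr false,
     ?_, ?_, ?_, rfl, rfl, ?_, rfl, rfl, ?_, ⟨?_, ?_⟩, ?_, ?_, ?_, ?_, ?_⟩)))
  · intro n h; exact nomatch h
  · exact ⟨fun n n' b h h' => (Option.some.inj h).trans (Option.some.inj h').symm,
      fun n b h => trivial, fun b hb => ⟨b, rfl⟩⟩
  · refine ⟨?_, ?_, ?_⟩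
    · intro x0 x0' e h h'
      match x0, x0' with
      | Sum.inl y0, Sum.inl y0' =>
        exact congrArg Sum.inl
          (Subtype.ext ((Option.some.inj h).trans (Option.some.inj h').symm))
      | Sum.inr _, _ => exact nomatch h
      | Sum.inl y0, Sum.inr _ => exact nomatch h'
    · intro x0 e h
      match x0 with
      | Sum.inl y0 =>
        cases Option.some.inj h
        exact y0.2
      | Sum.inr _ => exact nomatch h
    · intro e he
      exact ⟨Sum.inl ⟨e, he⟩, rfl⟩
  · intro h; exact Bool.noConfusion (Sum.inr.inj h)
  · intro e he
    match e with
    | Sum.inl y0 => exact nomatch he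
    | Sum.inr b =>
      cases b
      · exact Or.inr rfl
      · exact Or.inl rfl
  · -- edge agreement off {x, y, w}
    intro x0 y0 hxy0 hynq
    match x0 with
    | Sum.inl z0 =>
      cases Option.some.inj hxy0
      have h1 : z0.val ≠ x := fun h => hynq (by rw [h]; exact Or.inl rfl)
      have h2 : z0.val ≠ y := fun h => hynq (by rw [h]; exact Or.inr (Or.inl rfl))
      have h3 : z0.val ≠ w := fun h => hynq (by rw [h]; exact Or.inr (Or.inr rfl))
      refine ⟨rfl, ?_, ?_, ?_, rfl⟩
      · show some (if z0.val = w then m else R.src z0.val) = some (R.src z0.val)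
        rw [if_neg h3]
      · show (if z0.val = x ∨ z0.val = y then some l else R.tgt z0.val).bind
          (fun n => some n) = R.tgt z0.val
        rw [if_neg (fun h => h.elim h1 h2)]
        exact bind_some_eq _
      · show (if z0.val = x then i1 else if z0.val = y then i2
          else R.pIdx z0.val) = R.pIdx z0.val
        rw [if_neg h1, if_neg h2]
    | Sum.inr _ => exact nomatch hxy0
  · -- node agreement
    intro n m0 hnm _
    cases Option.some.inj hnm
    exact ⟨rfl, bind_some_eq _, fun b b' hbb' => by cases Option.some.inj hbb'; rfl⟩
  · -- the edge x
    intro e he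
    match e with
    | Sum.inl z0 =>
      have hz : z0.val = x := Option.some.inj he
      refine ⟨congrArg R.typ hz, ?_, ?_, ?_, congrArg R.cIdx hz⟩
      · show some (if z0.val = w then m else R.src z0.val) = some (R.src x)
        rw [if_neg (fun h => hwx (h.symm.trans hz)), hz]
      · show (if z0.val = x ∨ z0.val = y then some l else R.tgt z0.val) = some l
        rw [if_pos (Or.inl hz)]
      · show (if z0.val = x then i1 else if z0.val = y then i2
          else R.pIdx z0.val) = i1
        rw [if_pos hz]
    | Sum.inr _ => exact nomatch he
  · -- the edge y
    intro e he
    match e with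
    | Sum.inl z0 =>
      have hz : z0.val = y := Option.some.inj he
      refine ⟨congrArg R.typ hz, ?_, ?_, ?_, congrArg R.cIdx hz⟩
      · show some (if z0.val = w then m else R.src z0.val) = some (R.src y)
        rw [if_neg (fun h => hwy (h.symm.trans hz)), hz]
      · show (if z0.val = x ∨ z0.val = y then some l else R.tgt z0.val) = some l
        rw [if_pos (Or.inr hz)]
      · show (if z0.val = x then i1 else if z0.val = y then i2
          else R.pIdx z0.val) = i2
        rw [if_neg (fun h => hxy (hz.symm.trans h).symm), if_pos hz]
    | Sum.inr _ => exact nomatch he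
  · -- the edge w
    intro e he
    match e with
    | Sum.inl z0 =>
      have hz : z0.val = w := Option.some.inj he
      refine ⟨congrArg R.typ hz, ?_, ?_, ?_, congrArg R.cIdx hz⟩
      · show (if z0.val = w then m else R.src z0.val) = m
        rw [if_pos hz]
      · show (if z0.val = x ∨ z0.val = y then some l else R.tgt z0.val).bind
          (fun n => some n) = R.tgt w
        rw [if_neg (fun h => h.elim (fun h' => hwx (hz.symm.trans h'))
          (fun h' => hwy (hz.symm.trans h'))), hz]
        exact bind_some_eq _
      · show (if z0.val = x then i1 else if z0.val = y then i2
          else R.pIdx z0.val) = R.pIdx w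
        rw [if_neg (fun h => hwx (hz.symm.trans h)),
          if_neg (fun h => hwy (hz.symm.trans h)), hz]
    | Sum.inr _ => exact nomatch he
  · -- the fresh edge x'
    exact ⟨rfl, rfl, rfl, rfl, rfl⟩
  · -- the fresh edge y'
    exact ⟨rfl, rfl, rfl, rfl, rfl⟩

/-- The `sync`-elimination step applies. -/
theorem red_syncelim (hWF : R.WF) {l : R.Node}
    (hl : R.sort l = .sync) (hbl : R.box l = none)
    (hones : ∀ e ∈ R.prems l, R.sort (R.src e) = .one) :
    ∃ Q, Step R Q := by
  classical
  have H : ∀ e, R.tgt e = some l → ∃ f, R.src f = l ∧ R.cIdx f = R.pIdx e ∧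
      R.typ f = R.typ e ∧ ∀ f', R.src f' = l → R.cIdx f' = R.pIdx e → f' = f :=
    fun e he => hWF.sync_prem_concl hl he
  choose mc hmc1 hmc2 hmc3 hmc4 using H
  have hmc_tgt : ∀ e (he : R.tgt e = some l) n, R.tgt (mc e he) = some n → n ≠ l := by
    intro e he n htn hn
    subst hn
    have := hones (mc e he) (mem_prems.mpr htn)
    rw [hmc1 e he, hl] at this
    exact LinkSort.noConfusion this
  refine ⟨{
    Edge := {e : R.Edge // R.src e ≠ l}
    Node := {n : R.Node // n ≠ l}
    edgeFintype := inferInstance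
    nodeFintype := inferInstance
    edgeDecEq := inferInstance
    nodeDecEq := inferInstance
    typ := fun x => R.typ x.val
    sort := fun n => R.sort n.val
    src := fun x => ⟨R.src x.val, x.2⟩
    tgt := fun x =>
      if hx : R.tgt x.val = some l then
        Option.pmap (fun n hn => ⟨n, hn⟩) (R.tgt (mc x.val hx))
          (fun n hn => hmc_tgt x.val hx n hn)
      else
        Option.pmap (fun n hn => ⟨n, hn⟩) (R.tgt x.val)
          (fun n hn => fun h => hx (h ▸ hn))
    pIdx := fun x =>
      if hx : R.tgt x.val = some l then R.pIdx (mc x.val hx) else R.pIdx x.val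
    cIdx := fun x => R.cIdx x.val
    box := fun n => Option.pmap (fun b hb => ⟨b, hb⟩) (R.box n.val)
      (fun b hb => sort_ne (hWF.box_sort hb) hl (by decide))
    boxes := fun n => (R.boxes n.val).subtype _ }, ?_⟩
  refine Or.inr (Or.inr (Or.inl (Or.inr (Or.inr (Or.inr
    ⟨l, hl, hbl, hones, fun n => some n.val, fun x => some x.val,
     ?_, ?_, ?_, ?_, ⟨?_, ?_⟩, ?_⟩)))))
  · intro n h; exact nomatch h
  · intro x h; exact nomatch h
  · refine ⟨?_, ?_, ?_⟩
    · intro n n' b h h'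
      exact Subtype.ext ((Option.some.inj h).trans (Option.some.inj h').symm)
    · intro n b h
      cases Option.some.inj h
      exact n.2
    · intro b hb
      exact ⟨⟨b, hb⟩, rfl⟩
  · refine ⟨?_, ?_, ?_⟩
    · intro n n' b h h'
      exact Subtype.ext ((Option.some.inj h).trans (Option.some.inj h').symm)
    · intro n b h
      cases Option.some.inj h
      exact n.2
    · intro b hb
      exact ⟨⟨b, hb⟩, rfl⟩
  · -- edge agreement off the premisses of l
    intro x y hxy hynq
    cases Option.some.inj hxy
    have hxl : ¬ (R.tgt x.val = some l) := hynq
    refine ⟨rfl, rfl, ?_, ?_, rfl⟩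
    · show (if hx : R.tgt x.val = some l then _ else _ : Option _).bind _ = _
      rw [dif_neg hxl]
      exact pmap_bind_eq _ _
    · show (if hx : R.tgt x.val = some l then R.pIdx (mc x.val hx)
        else R.pIdx x.val) = R.pIdx x.val
      rw [dif_neg hxl]
  · -- node agreement
    intro n m hnm _
    cases Option.some.inj hnm
    refine ⟨rfl, pmap_bind_eq _ _, ?_⟩
    intro b b' hbb'
    cases Option.some.inj hbb'
    exact Finset.mem_subtype
  · -- merged premiss/conclusion pairs
    intro x e f hxe hel hfl hcf
    cases Option.some.inj hxe
    have hf : f = mc x.val hel := hmc4 x.val hel f hfl hcf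
    refine ⟨rfl, rfl, ?_, ?_, rfl⟩
    · show (if hx : R.tgt x.val = some l then _ else _ : Option _).bind _ = _
      rw [dif_pos hel, hf]
      exact pmap_bind_eq _ _
    · show (if hx : R.tgt x.val = some l then R.pIdx (mc x.val hx)
        else R.pIdx x.val) = R.pIdx f
      rw [dif_pos hel, hf]

/-- The `⊗/⅋` reduction step applies. -/
theorem red_tensparr (hWF : R.WF) (hC : R.Correct) {c t p : R.Node} {s s' : R.Edge}
    (hc : R.sort c = .cut) (ht : R.sort t = .tens) (hp : R.sort p = .parr)
    (hbc : R.box c = none) (hbt : R.box t = none) (hbp : R.box p = none)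
    (hss : s ≠ s') (hprem : R.prems c = {s, s'})
    (hst : R.src s = t) (hsp : R.src s' = p) :
    ∃ Q, Step R Q := by
  classical
  have htp : t ≠ p := sort_ne ht hp (by decide)
  have htc : t ≠ c := sort_ne ht hc (by decide)
  have hpc : p ≠ c := sort_ne hp hc (by decide)
  have hts : R.tgt s = some c := mem_prems.mp (by rw [hprem]; simp)
  have hts' : R.tgt s' = some c := mem_prems.mp (by rw [hprem]; simp)
  obtain ⟨a1, a2, g, ha12, hpremt, hpa1, hpa2, hconct0, -⟩ := hWF.tens t ht
  have hgs : g = s := by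
    have : s ∈ R.concls t := mem_concls.mpr hst
    rw [hconct0, Finset.mem_singleton] at this
    exact this.symm
  rw [hgs] at hconct0
  obtain ⟨b1, b2, g', hb12, hpremp, hpb1, hpb2, hconcp0, -⟩ := hWF.parr p hp
  have hgs' : g' = s' := by
    have : s' ∈ R.concls p := mem_concls.mpr hsp
    rw [hconcp0, Finset.mem_singleton] at this
    exact this.symm
  rw [hgs'] at hconcp0
  have hta1 : R.tgt a1 = some t := mem_prems.mp (by rw [hpremt]; simp)
  have hta2 : R.tgt a2 = some t := mem_prems.mp (by rw [hpremt]; simp)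
  have htb1 : R.tgt b1 = some p := mem_prems.mp (by rw [hpremp]; simp)
  have htb2 : R.tgt b2 = some p := mem_prems.mp (by rw [hpremp]; simp)
  -- distinctness of the relevant edges
  have has : ∀ e, R.tgt e = some t → e ≠ s ∧ e ≠ s' := by
    intro e he
    constructor
    · intro h
      exact hC.no_self_edge hst (h ▸ he) hbt
    · intro h
      rw [h, hts'] at he
      exact htc (Option.some.inj he).symm
  have hbs : ∀ e, R.tgt e = some p → e ≠ s ∧ e ≠ s' := by
    intro e he
    constructor
    · intro h
      rw [h, hts] at he
      exact hpc (Option.some.inj he).symm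
    · intro h
      exact hC.no_self_edge hsp (h ▸ he) hbp
  have hsrc_ne_t : ∀ x0 : R.Edge, x0 ≠ s → R.src x0 ≠ t := by
    intro x0 hx0 h
    have : x0 ∈ R.concls t := mem_concls.mpr h
    rw [hconct0, Finset.mem_singleton] at this
    exact hx0 this
  have hsrc_ne_p : ∀ x0 : R.Edge, x0 ≠ s' → R.src x0 ≠ p := by
    intro x0 hx0 h
    have : x0 ∈ R.concls p := mem_concls.mpr h
    rw [hconcp0, Finset.mem_singleton] at this
    exact hx0 this
  have htgt_ne_p : ∀ (x0 : R.Edge), x0 ≠ b1 → x0 ≠ b2 → ∀ n, R.tgt x0 = some n →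
      n ≠ p := by
    intro x0 h1 h2 n htn hn
    have : x0 ∈ R.prems p := mem_prems.mpr (hn ▸ htn)
    rw [hpremp] at this
    simp only [Finset.mem_insert, Finset.mem_singleton] at this
    rcases this with h | h
    · exact h1 h
    · exact h2 h
  have htgt_ne_t : ∀ (x0 : R.Edge), x0 ≠ a1 → x0 ≠ a2 → ∀ n, R.tgt x0 = some n →
      n ≠ t := by
    intro x0 h1 h2 n htn hn
    have : x0 ∈ R.prems t := mem_prems.mpr (hn ▸ htn)
    rw [hpremt] at this
    simp only [Finset.mem_insert, Finset.mem_singleton] at this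
    rcases this with h | h
    · exact h1 h
    · exact h2 h
  have hbox_ne : ∀ m b0, R.box m = some b0 → b0 ≠ p ∧ b0 ≠ t := by
    intro m b0 hb0
    have hs0 := hWF.box_sort hb0
    exact ⟨sort_ne hs0 hp (by decide), sort_ne hs0 ht (by decide)⟩
  refine ⟨{
    Edge := {x0 : R.Edge // x0 ≠ s ∧ x0 ≠ s'}
    Node := {n : R.Node // n ≠ p}
    edgeFintype := inferInstance
    nodeFintype := inferInstance
    edgeDecEq := inferInstance
    nodeDecEq := inferInstance
    typ := fun x0 => R.typ x0.val
    sort := fun n => if n.val = t then .cut else R.sort n.val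
    src := fun x0 => ⟨R.src x0.val, hsrc_ne_p x0.val x0.2.2⟩
    tgt := fun x0 =>
      if x0.val = a1 ∨ x0.val = b1 then some ⟨c, fun h => hpc h.symm⟩
      else if x0.val = a2 ∨ x0.val = b2 then some ⟨t, htp⟩
      else if h1 : x0.val = b1 ∨ x0.val = b2 then some ⟨c, fun h => hpc h.symm⟩
      else Option.pmap (fun n hn => ⟨n, hn⟩) (R.tgt x0.val)
        (fun n hn => htgt_ne_p x0.val (fun h => h1 (Or.inl h))
          (fun h => h1 (Or.inr h)) n hn)
    pIdx := fun x0 => R.pIdx x0.val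
    cIdx := fun x0 => R.cIdx x0.val
    box := fun n => Option.pmap (fun b0 hb0 => ⟨b0, hb0⟩) (R.box n.val)
      (fun b0 hb0 => (hbox_ne n.val b0 hb0).1)
    boxes := fun n => (R.boxes n.val).subtype _ }, ?_⟩
  refine Or.inr (Or.inl
    ⟨c, t, p, s, s', a1, a2, b1, b2, hc, ht, hp, hbc, hbt, hbp, hss, hprem,
     hconct0, hconcp0, ha12, hpremt, hpa1, hpa2, hb12, hpremp, hpb1, hpb2,
     fun n => if h : n.val = t then none else some n.val,
     fun x0 => some x0.val, ⟨t, htp⟩,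
     ?_, ?_, ?_, ?_, ?_, ?_, ?_, ?_, ⟨?_, ?_⟩, ?_, ?_⟩)
  · intro x0 h; exact nomatch h
  · refine ⟨?_, ?_, ?_⟩
    · intro n n' b h h'
      simp only [] at h h'
      by_cases h1 : n.val = t
      · rw [dif_pos h1] at h; exact nomatch h
      by_cases h2 : n'.val = t
      · rw [dif_pos h2] at h'; exact nomatch h'
      rw [dif_neg h1] at h
      rw [dif_neg h2] at h'
      exact Subtype.ext ((Option.some.inj h).trans (Option.some.inj h').symm)
    · intro n b h
      simp only [] at h
      by_cases h1 : n.val = t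
      · rw [dif_pos h1] at h; exact nomatch h
      · rw [dif_neg h1] at h
        cases Option.some.inj h
        exact ⟨h1, n.2⟩
    · intro b hb
      exact ⟨⟨b, hb.2⟩, by show (if h : b = t then none else some b) = some b; rw [dif_neg hb.1]⟩
  · refine ⟨?_, ?_, ?_⟩
    · intro x0 x0' e h h'
      exact Subtype.ext ((Option.some.inj h).trans (Option.some.inj h').symm)
    · intro x0 e h
      cases Option.some.inj h
      exact x0.2
    · intro e he
      exact ⟨⟨e, he⟩, rfl⟩
  · show (if h : t = t then none else _ : Option _) = none
    rw [dif_pos rfl]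
  · intro n hn
    simp only [] at hn
    by_cases h1 : n.val = t
    · exact Subtype.ext h1
    · rw [dif_neg h1] at hn
      exact nomatch hn
  · show (if t = t then LinkSort.cut else R.sort t) = .cut
    rw [if_pos rfl]
  · show Option.pmap _ (R.box t) _ = none
    exact pmap_eq_none _ _ hbt
  · show (R.boxes t).subtype _ = ∅
    rw [hWF.boxesNone t hbt]
    rfl
  · -- edge agreement off {a1, a2, b1, b2}
    intro x0 y0 hxy0 hynq
    cases Option.some.inj hxy0
    have h1 : x0.val ≠ a1 := fun h => hynq (by rw [h]; exact Or.inl rfl)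
    have h2 : x0.val ≠ a2 := fun h => hynq (by rw [h]; exact Or.inr (Or.inl rfl))
    have h3 : x0.val ≠ b1 := fun h => hynq (by rw [h]; exact Or.inr (Or.inr (Or.inl rfl)))
    have h4 : x0.val ≠ b2 := fun h => hynq (by rw [h]; exact Or.inr (Or.inr (Or.inr rfl)))
    refine ⟨rfl, ?_, ?_, rfl, rfl⟩
    · show (if h : R.src x0.val = t then none else some (R.src x0.val)) =
        some (R.src x0.val)
      rw [dif_neg (hsrc_ne_t x0.val x0.2.1)]
    · show ((if x0.val = a1 ∨ x0.val = b1 then _ else if x0.val = a2 ∨ x0.val = b2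
        then _ else if h1 : x0.val = b1 ∨ x0.val = b2 then _ else _ : Option _).bind
          (fun n : {n0 : R.Node // n0 ≠ p} =>
            if h : n.val = t then none else some n.val)) = R.tgt x0.val
      rw [if_neg (fun h => h.elim h1 h3), if_neg (fun h => h.elim h2 h4),
        dif_neg (fun h => h.elim h3 h4)]
      exact pmap_bind_dite t _ _ (fun n hn => htgt_ne_t x0.val h1 h2 n hn)
  · -- node agreement
    intro n m hnm _
    simp only [] at hnm
    by_cases h1 : n.val = t
    · rw [dif_pos h1] at hnm; exact nomatch hnm
    rw [dif_neg h1] at hnm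
    cases Option.some.inj hnm
    refine ⟨?_, ?_, ?_⟩
    · show (if n.val = t then LinkSort.cut else R.sort n.val) = R.sort n.val
      rw [if_neg h1]
    · show (Option.pmap _ (R.box n.val) _).bind
        (fun n0 : {n1 : R.Node // n1 ≠ p} =>
          if h : n0.val = t then none else some n0.val) = R.box n.val
      exact pmap_bind_dite t _ _ (fun b0 hb0 => (hbox_ne n.val b0 hb0).2)
    · intro b b' hbb'
      simp only [] at hbb'
      by_cases hb1 : b.val = t
      · rw [dif_pos hb1] at hbb'; exact nomatch hbb'
      · rw [dif_neg hb1] at hbb'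
        cases Option.some.inj hbb'
        exact Finset.mem_subtype
  · -- the edges a1, b1 (plugged into the old cut)
    intro x0 y0 hxy0 hy0
    cases Option.some.inj hxy0
    have hcond : x0.val = a1 ∨ x0.val = b1 := hy0
    refine ⟨rfl, ?_, ?_, rfl⟩
    · show (if h : R.src x0.val = t then none else some (R.src x0.val)) =
        some (R.src x0.val)
      rw [dif_neg (hsrc_ne_t x0.val x0.2.1)]
    · show ((if x0.val = a1 ∨ x0.val = b1 then some ⟨c, fun h => hpc h.symm⟩
        else _ : Option _).bind
          (fun n : {n0 : R.Node // n0 ≠ p} =>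
            if h : n.val = t then none else some n.val)) = some c
      rw [if_pos hcond]
      show (if h : c = t then none else some c) = some c
      rw [dif_neg (fun h => htc h.symm)]
  · -- the edges a2, b2 (plugged into the new cut c')
    intro x0 y0 hxy0 hy0
    cases Option.some.inj hxy0
    have hcond2 : x0.val = a2 ∨ x0.val = b2 := hy0
    have hcond1 : ¬ (x0.val = a1 ∨ x0.val = b1) := by
      rintro (h | h)
      · rcases hcond2 with h' | h'
        · exact ha12 (h.symm.trans h')
        · rw [h'] at h
          rw [h, hta1] at htb2
          exact htp (Option.some.inj htb2)
      · rcases hcond2 with h' | h'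
        · rw [h'] at h
          rw [h, htb1] at hta2
          exact htp (Option.some.inj hta2).symm
        · exact hb12 (h.symm.trans h')
    refine ⟨rfl, ?_, ?_, rfl⟩
    · show (if h : R.src x0.val = t then none else some (R.src x0.val)) =
        some (R.src x0.val)
      rw [dif_neg (hsrc_ne_t x0.val x0.2.1)]
    · show (if x0.val = a1 ∨ x0.val = b1 then some ⟨c, fun h => hpc h.symm⟩
        else if x0.val = a2 ∨ x0.val = b2 then some ⟨t, htp⟩
        else _ : Option {n : R.Node // n ≠ p}) = some ⟨t, htp⟩
      rw [if_neg hcond1, if_pos hcond2]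

end Struct

end Constructions


section MainWalk

namespace Struct

variable {R : Struct}

/-- The invariant of the redex-searching walk: `(e, true)` is a downwards
traversal of a `⊥`-carrying depth-0 edge, `(e, false)` an upwards traversal
towards the source of a cut or sync premiss. -/
def GoodT (R : Struct) : R.Edge × Bool → Prop
  | (e, true) => R.box (R.src e) = none ∧ (R.typ e).hasBotB = true ∧
      (R.sort (R.src e) = .bot ∨ R.sort (R.src e) = .tens ∨
       R.sort (R.src e) = .parr ∨ R.sort (R.src e) = .sync)
  | (e, false) => ∃ n, R.tgt e = some n ∧ R.box n = none ∧
      (R.sort n = .cut ∨ (R.sort n = .sync ∧ ¬ (R.typ e).Negative)) ∧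
      (R.box (R.src e) ≠ none ∨ R.sort (R.src e) = .sync ∨ R.sort (R.src e) = .ax)

theorem goodT_connects (hWF : R.WF) (hcl : R.Closed) :
    ∀ t, GoodT R t → R.ConnectsAt none t.1 (R.tailN t) (R.headN t) := by
  rintro ⟨e, d⟩ hg
  cases d
  · obtain ⟨n, htn, hbn, -, -⟩ := hg
    refine ⟨n, htn, Or.inl hbn, Or.inr ⟨?_, ?_⟩⟩
    · rw [headN_false]
      exact hWF.repAt_nodeRep _
    · rw [tailN_false, tgtD_eq htn]
      exact Or.inl ⟨hbn, rfl⟩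
  · obtain ⟨hb, hbot, -⟩ := hg
    cases htn : R.tgt e with
    | none =>
      have := hcl e htn
      rw [hbot] at this
      exact absurd this (by simp)
    | some n =>
      have hbn : R.box n = none := hWF.tgt_depth0 hb htn
      refine ⟨n, htn, Or.inr hb, Or.inl ⟨?_, ?_⟩⟩
      · rw [tailN_true]
        exact Or.inl ⟨hb, rfl⟩
      · rw [headN_true, tgtD_eq htn]
        exact Or.inl ⟨hbn, rfl⟩

theorem goodT_sync (hWF : R.WF) :
    ∀ t, GoodT R t → ∀ l, R.sort l = .sync → R.OutEdgeOf l t.1 →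
      R.headN t = R.nodeRep l := by
  rintro ⟨e, d⟩ hg l hl hout
  cases d
  · obtain ⟨n, htn, hbn, hsn, -⟩ := hg
    rcases hout.2 with ⟨hsrc, -⟩ | ⟨htgt, hneg⟩
    · rw [headN_false, hsrc]
    · rw [htgt] at htn
      cases Option.some.inj htn
      rcases hsn with hcut | ⟨-, hnneg⟩
      · rw [hcut] at hl
        exact absurd hl (by simp)
      · exact absurd hneg hnneg
  · obtain ⟨hb, hbot, -⟩ := hg
    rcases hout.2 with ⟨-, hpos⟩ | ⟨htgt, -⟩
    · rw [hpos.hasBot] at hbot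
      exact absurd hbot (by simp)
    · have hbl : R.box l = none := hWF.tgt_depth0 hb htgt
      rw [headN_true, tgtD_eq htgt, hWF.nodeRep_eq hbl]

theorem goodT_parr (hWF : R.WF) :
    ∀ t, GoodT R t → ∀ p, R.sort p = .parr → R.tgt t.1 = some p →
      R.headN t = p := by
  rintro ⟨e, d⟩ hg p hp htp
  cases d
  · obtain ⟨n, htn, -, hsn, -⟩ := hg
    rw [htp] at htn
    cases Option.some.inj htn
    rcases hsn with hcut | ⟨hsync, -⟩
    · rw [hcut] at hp; exact absurd hp (by simp)
    · rw [hsync] at hp; exact absurd hp (by simp)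
  · rw [headN_true, tgtD_eq htp]

theorem goodT_dep (hWF : R.WF) :
    ∀ e, GoodT R (e, true) → R.nodeRep (R.src e) = R.src e := by
  intro e hg
  exact hWF.nodeRep_eq hg.1

/-- The walk relation of the redex search is well-founded. -/
theorem walk_wf (hWF : R.WF) (hC : R.Correct) (hcl : R.Closed) :
    WellFounded (fun a b : R.Edge × Bool =>
      Relation.TransGen (WalkStep (GoodT R)) b a) := by
  have hirr : ∀ t, ¬ Relation.TransGen (WalkStep (GoodT R)) t t :=
    hC.no_walk_cycle (GoodT R) (goodT_connects hWF hcl) (goodT_sync hWF)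
      (goodT_parr hWF) (goodT_dep hWF)
  haveI : IsTrans (R.Edge × Bool)
      (fun a b => Relation.TransGen (WalkStep (GoodT R)) b a) :=
    ⟨fun a b c hab hbc => Relation.TransGen.trans hbc hab⟩
  haveI : IsIrrefl (R.Edge × Bool)
      (fun a b => Relation.TransGen (WalkStep (GoodT R)) b a) :=
    ⟨fun a h => hirr a h⟩
  exact Finite.wellFounded_of_trans_of_irrefl _


theorem WF.cut_partner (hWF : R.WF) {c : R.Node} {g : R.Edge}
    (hc : R.sort c = .cut) (hg : R.tgt g = some c) :
    ∃ h, h ≠ g ∧ R.tgt h = some c ∧ R.typ h = (R.typ g).dual ∧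
      R.prems c = {g, h} := by
  obtain ⟨-, e, f, hef, hpr, hdual⟩ := hWF.cut c hc
  have hte : R.tgt e = some c := mem_prems.mp (by rw [hpr]; simp)
  have htf : R.tgt f = some c := mem_prems.mp (by rw [hpr]; simp)
  have hmem : g ∈ R.prems c := mem_prems.mpr hg
  rw [hpr] at hmem
  simp only [Finset.mem_insert, Finset.mem_singleton] at hmem
  rcases hmem with rfl | rfl
  · exact ⟨f, fun h => hef h.symm, htf, hdual, hpr⟩
  · exact ⟨e, hef, hte, by rw [hdual, Formula.dual_dual], by rw [hpr, Finset.pair_comm]⟩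

theorem WF.typ_of_tens (hWF : R.WF) {n : R.Node} (ht : R.sort n = .tens)
    {g : R.Edge} (hs : R.src g = n) : ∃ A B, R.typ g = .tens A B := by
  obtain ⟨x, y, g0, -, -, -, -, hconc, htyp⟩ := hWF.tens n ht
  have : g ∈ R.concls n := mem_concls.mpr hs
  rw [hconc, Finset.mem_singleton] at this
  subst this
  exact ⟨_, _, htyp⟩

theorem WF.typ_of_parr (hWF : R.WF) {n : R.Node} (ht : R.sort n = .parr)
    {g : R.Edge} (hs : R.src g = n) : ∃ A B, R.typ g = .parr A B := by
  obtain ⟨x, y, g0, -, -, -, -, hconc, htyp⟩ := hWF.parr n ht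
  have : g ∈ R.concls n := mem_concls.mpr hs
  rw [hconc, Finset.mem_singleton] at this
  subst this
  exact ⟨_, _, htyp⟩

/-- `ax/cut` from a premiss of the cut which is an axiom conclusion. -/
theorem red_axcut' (hWF : R.WF) (hC : R.Correct) {a c : R.Node} {v q : R.Edge}
    (ha : R.sort a = .ax) (hc : R.sort c = .cut)
    (hba : R.box a = none) (hbc : R.box c = none)
    (hsv : R.src v = a) (hvq : v ≠ q) (hprem : R.prems c = {v, q}) :
    ∃ Q, Step R Q := by
  obtain ⟨-, e0, f0, hef, hcon, -⟩ := hWF.ax a ha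
  have hv : v ∈ R.concls a := mem_concls.mpr hsv
  rw [hcon] at hv
  simp only [Finset.mem_insert, Finset.mem_singleton] at hv
  rcases hv with rfl | rfl
  · exact red_axcut hWF hC ha hc hba hbc hef hvq hcon hprem
  · exact red_axcut hWF hC ha hc hba hbc (fun h => hef h.symm) hvq
      (by rw [hcon, Finset.pair_comm]) hprem


/-- The main walk: from any good traversal, a redex can be found. -/
theorem walk_red (hWF : R.WF) (hC : R.Correct) (hcl : R.Closed) :
    ∀ t, GoodT R t → ∃ Q, Step R Q := by
  classical
  intro t
  refine (walk_wf hWF hC hcl).induction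
    (C := fun t => GoodT R t → ∃ Q, Step R Q) t ?_
  rintro ⟨e, d⟩ IH hGood
  cases d with
  | false =>
    obtain ⟨n, htn, hbn, htail, hsrc3⟩ := id hGood
    by_cases hbsrc : R.box (R.src e) = none
    case neg =>
      -- jump through the box boundary via its lock
      cases hbx : R.box (R.src e) with
      | none => exact absurd hbx hbsrc
      | some b0 =>
        obtain ⟨hmem, hbrep⟩ := hWF.nodeRep_spec hbx
        have hsortrep : R.sort (R.nodeRep (R.src e)) = .bot :=
          hWF.boxSort _ _ hmem
        obtain ⟨-, k, hk, hkt⟩ := hWF.bot _ hsortrep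
        have hsk : R.src k = R.nodeRep (R.src e) :=
          mem_concls.mp (by rw [hk]; simp)
        have hg' : GoodT R (k, true) := ⟨by rw [hsk]; exact hbrep,
          by rw [hkt]; rfl, Or.inl (by rw [hsk]; exact hsortrep)⟩
        refine IH (k, true) (Relation.TransGen.single ⟨hGood, hg', ?_, ?_⟩) hg'
        · rw [headN_false, tailN_true, hsk]
        · intro h
          have h' : e = k := h
          rw [h', hsk] at hbsrc
          exact hbsrc hbrep
    case pos =>
      rcases hsrc3 with hbox | hsync | hax
      · exact absurd hbsrc hbox
      · -- the source of e is a sync link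
        have hpol := hWF.sync_concl_pol hsync (rfl : R.src e = R.src e)
        rcases hpol with hpos | hneg
        · -- CLIMB: move to the matched premiss of the sync link
          obtain ⟨x, htx, hpxc, htypx, -⟩ := hWF.sync_concl_prem hsync rfl
          have hxe : x ≠ e := by
            intro h
            exact hC.no_self_edge (rfl : R.src e = R.src e) (h ▸ htx) hbsrc
          have hposx : (R.typ x).Positive := htypx ▸ hpos
          by_cases hbx2 : R.box (R.src x) = none
          case neg =>
            have hg' : GoodT R (x, false) := ⟨R.src e, htx, hbsrc,
              Or.inr ⟨hsync, fun h => Formula.not_pos_neg hposx h⟩, Or.inl hbx2⟩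
            exact IH _ (Relation.TransGen.single ⟨hGood, hg',
              by rw [headN_false, tailN_false, hWF.nodeRep_eq hbsrc, tgtD_eq htx],
              fun h => hxe h.symm⟩) hg'
          case pos =>
            cases hsx : R.sort (R.src x) with
            | tens => exact red_syncmult hWF hsync (Or.inl hsx) hbsrc hbx2 rfl htx
            | parr =>
              obtain ⟨A, B, hAB⟩ := hWF.typ_of_parr hsx rfl
              rw [hAB] at hposx
              cases hposx
            | ax => exact red_syncax hWF hsync hsx hbsrc hbx2 hposx rfl htx
            | cut => exact (hWF.not_src_cut hsx rfl).elim
            | bot =>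
              have hb2 := hWF.typ_of_bot hsx rfl
              rw [hb2] at hposx
              cases hposx
            | sync =>
              have hg' : GoodT R (x, false) := ⟨_, htx, hbsrc,
                Or.inr ⟨hsync, fun h => Formula.not_pos_neg hposx h⟩,
                Or.inr (Or.inl hsx)⟩
              exact IH _ (Relation.TransGen.single ⟨hGood, hg',
                by rw [headN_false, tailN_false, hWF.nodeRep_eq hbsrc, tgtD_eq htx],
                fun h => hxe h.symm⟩) hg'
            | one =>
              -- blocked sync link: analyse its other premisses
              by_cases hall : ∀ e' ∈ R.prems (R.src e), R.sort (R.src e') = .one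
              · exact red_syncelim hWF hsync hbsrc hall
              · push_neg at hall
                obtain ⟨x2, hx2mem, hx2⟩ := hall
                have htx2 : R.tgt x2 = some (R.src e) := mem_prems.mp hx2mem
                have hx2e : x2 ≠ e := by
                  intro h
                  exact hC.no_self_edge (rfl : R.src e = R.src e) (h ▸ htx2) hbsrc
                rcases hWF.sync_prem_pol hsync htx2 with hpos2 | hneg2
                · by_cases hbx3 : R.box (R.src x2) = none
                  case neg =>
                    have hg' : GoodT R (x2, false) := ⟨_, htx2, hbsrc,
                      Or.inr ⟨hsync, fun h => Formula.not_pos_neg hpos2 h⟩,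
                      Or.inl hbx3⟩
                    exact IH _ (Relation.TransGen.single ⟨hGood, hg',
                      by rw [headN_false, tailN_false, hWF.nodeRep_eq hbsrc,
                        tgtD_eq htx2],
                      fun h => hx2e h.symm⟩) hg'
                  case pos =>
                    cases hsx2 : R.sort (R.src x2) with
                    | tens =>
                      exact red_syncmult hWF hsync (Or.inl hsx2) hbsrc hbx3 rfl htx2
                    | ax => exact red_syncax hWF hsync hsx2 hbsrc hbx3 hpos2 rfl htx2
                    | one => exact absurd hsx2 hx2
                    | sync =>
                      have hg' : GoodT R (x2, false) := ⟨_, htx2, hbsrc,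
                        Or.inr ⟨hsync, fun h => Formula.not_pos_neg hpos2 h⟩,
                        Or.inr (Or.inl hsx2)⟩
                      exact IH _ (Relation.TransGen.single ⟨hGood, hg',
                        by rw [headN_false, tailN_false, hWF.nodeRep_eq hbsrc,
                          tgtD_eq htx2],
                        fun h => hx2e h.symm⟩) hg'
                    | parr =>
                      obtain ⟨A, B, hAB⟩ := hWF.typ_of_parr hsx2 rfl
                      rw [hAB] at hpos2
                      cases hpos2
                    | bot =>
                      have hb2 := hWF.typ_of_bot hsx2 rfl
                      rw [hb2] at hpos2
                      cases hpos2
                    | cut => exact (hWF.not_src_cut hsx2 rfl).elim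
                · -- a negative premiss: descend through its matched conclusion
                  obtain ⟨f3, hsf3, -, htypf3, -⟩ := hWF.sync_prem_concl hsync htx2
                  have hg' : GoodT R (f3, true) := ⟨by rw [hsf3]; exact hbsrc,
                    by rw [htypf3]; exact hneg2.hasBot,
                    Or.inr (Or.inr (Or.inr (by rw [hsf3]; exact hsync)))⟩
                  refine IH _ (Relation.TransGen.single ⟨hGood, hg', ?_, ?_⟩) hg'
                  · rw [headN_false, tailN_true, hWF.nodeRep_eq hbsrc, hsf3]
                  · intro h
                    have h' : e = f3 := h
                    rw [← h'] at htypf3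
                    exact Formula.not_pos_neg hpos (htypf3 ▸ hneg2)
        · -- e is a negative conclusion of a sync link: the tail must be a cut
          rcases htail with hcut | ⟨-, hnneg⟩
          · obtain ⟨q, hqe, htq, -, hprem⟩ := hWF.cut_partner hcut htn
            exact red_synccut hWF hsync hcut hbsrc hbn hneg rfl htn hqe.symm hprem
          · exact absurd hneg hnneg
      · -- the source of e is an axiom
        rcases htail with hcut | ⟨hsyncn, hnneg⟩
        · obtain ⟨q, hqe, htq, -, hprem⟩ := hWF.cut_partner hcut htn
          exact red_axcut' hWF hC hax hcut hbsrc hbn rfl hqe.symm hprem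
        · rcases hWF.sync_prem_pol hsyncn htn with hpos | hneg
          · exact red_syncax hWF hsyncn hax hbn hbsrc hpos rfl htn
          · exact absurd hneg hnneg
  | true =>
    obtain ⟨hbsrc, hbot, hsorts⟩ := id hGood
    cases htn : R.tgt e with
    | none =>
      have hcle := hcl e htn
      rw [hbot] at hcle
      exact absurd hcle (by simp)
    | some n =>
      have hbn : R.box n = none := hWF.tgt_depth0 hbsrc htn
      cases hsn : R.sort n with
      | ax => exact (hWF.no_prems_sorts (Or.inl hsn) htn).elim
      | one => exact (hWF.no_prems_sorts (Or.inr (Or.inl hsn)) htn).elim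
      | bot => exact (hWF.no_prems_sorts (Or.inr (Or.inr hsn)) htn).elim
      | tens =>
        obtain ⟨x, y, g, hxy, hprm, -, -, hconc, htypg⟩ := hWF.tens n hsn
        have hsg : R.src g = n := mem_concls.mp (by rw [hconc]; simp)
        have hmem : e ∈ R.prems n := mem_prems.mpr htn
        rw [hprm] at hmem
        simp only [Finset.mem_insert, Finset.mem_singleton] at hmem
        have hbg : (R.typ g).hasBotB = true := by
          rw [htypg]
          show ((R.typ x).hasBotB || (R.typ y).hasBotB) = true
          rcases hmem with rfl | rfl
          · rw [hbot]; simp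
          · rw [hbot]; simp
        have hg' : GoodT R (g, true) := ⟨by rw [hsg]; exact hbn, hbg,
          Or.inr (Or.inl (by rw [hsg]; exact hsn))⟩
        refine IH _ (Relation.TransGen.single ⟨hGood, hg', ?_, ?_⟩) hg'
        · rw [headN_true, tailN_true, tgtD_eq htn, hsg]
        · intro h
          have h' : e = g := h
          exact hC.no_self_edge hsg (h' ▸ htn) hbn
      | parr =>
        obtain ⟨x, y, g, hxy, hprm, -, -, hconc, htypg⟩ := hWF.parr n hsn
        have hsg : R.src g = n := mem_concls.mp (by rw [hconc]; simp)
        have hmem : e ∈ R.prems n := mem_prems.mpr htn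
        rw [hprm] at hmem
        simp only [Finset.mem_insert, Finset.mem_singleton] at hmem
        have hbg : (R.typ g).hasBotB = true := by
          rw [htypg]
          show ((R.typ x).hasBotB || (R.typ y).hasBotB) = true
          rcases hmem with rfl | rfl
          · rw [hbot]; simp
          · rw [hbot]; simp
        have hg' : GoodT R (g, true) := ⟨by rw [hsg]; exact hbn, hbg,
          Or.inr (Or.inr (Or.inl (by rw [hsg]; exact hsn)))⟩
        refine IH _ (Relation.TransGen.single ⟨hGood, hg', ?_, ?_⟩) hg'
        · rw [headN_true, tailN_true, tgtD_eq htn, hsg]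
        · intro h
          have h' : e = g := h
          exact hC.no_self_edge hsg (h' ▸ htn) hbn
      | sync =>
        obtain ⟨f, hsf, -, htypf, -⟩ := hWF.sync_prem_concl hsn htn
        have hg' : GoodT R (f, true) := ⟨by rw [hsf]; exact hbn,
          by rw [htypf]; exact hbot,
          Or.inr (Or.inr (Or.inr (by rw [hsf]; exact hsn)))⟩
        refine IH _ (Relation.TransGen.single ⟨hGood, hg', ?_, ?_⟩) hg'
        · rw [headN_true, tailN_true, tgtD_eq htn, hsf]
        · intro h
          have h' : e = f := h
          exact hC.no_self_edge hsf (h' ▸ htn) hbn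
      | cut =>
        obtain ⟨h2, hh2e, hth2, hdual2, hprem2⟩ := hWF.cut_partner hsn htn
        rcases hsorts with hsbot | hstens | hsparr | hssync
        · -- the source of e is a bot link, its partner has type 1
          have htype : R.typ e = .bot := hWF.typ_of_bot hsbot rfl
          have htyph2 : R.typ h2 = .one := by rw [hdual2, htype]; rfl
          by_cases hbh2 : R.box (R.src h2) = none
          case neg =>
            have hg' : GoodT R (h2, false) := ⟨n, hth2, hbn, Or.inl hsn, Or.inl hbh2⟩
            exact IH _ (Relation.TransGen.single ⟨hGood, hg',
              by rw [headN_true, tailN_false, tgtD_eq htn, tgtD_eq hth2],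
              fun h => hh2e h.symm⟩) hg'
          case pos =>
            cases hsh2 : R.sort (R.src h2) with
            | one =>
              exact red_onebot hWF hsn hsh2 hsbot hbn hbh2 hbsrc hh2e
                (by rw [hprem2, Finset.pair_comm]) rfl rfl
            | ax =>
              exact red_axcut' hWF hC hsh2 hsn hbh2 hbn rfl hh2e
                (by rw [hprem2, Finset.pair_comm])
            | sync =>
              have hg' : GoodT R (h2, false) := ⟨n, hth2, hbn, Or.inl hsn,
                Or.inr (Or.inl hsh2)⟩
              exact IH _ (Relation.TransGen.single ⟨hGood, hg',
                by rw [headN_true, tailN_false, tgtD_eq htn, tgtD_eq hth2],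
                fun h => hh2e h.symm⟩) hg'
            | bot =>
              have hb2 := hWF.typ_of_bot hsh2 rfl
              rw [hb2] at htyph2
              exact Formula.noConfusion htyph2
            | tens =>
              obtain ⟨A, B, hAB⟩ := hWF.typ_of_tens hsh2 rfl
              rw [hAB] at htyph2
              exact Formula.noConfusion htyph2
            | parr =>
              obtain ⟨A, B, hAB⟩ := hWF.typ_of_parr hsh2 rfl
              rw [hAB] at htyph2
              exact Formula.noConfusion htyph2
            | cut => exact (hWF.not_src_cut hsh2 rfl).elim
        · -- the source of e is a tensor link, its partner has a par type
          obtain ⟨A, B, hAB⟩ := hWF.typ_of_tens hstens rfl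
          have htyph2 : R.typ h2 = .parr A.dual B.dual := by rw [hdual2, hAB]; rfl
          by_cases hbh2 : R.box (R.src h2) = none
          case neg =>
            have hg' : GoodT R (h2, false) := ⟨n, hth2, hbn, Or.inl hsn, Or.inl hbh2⟩
            exact IH _ (Relation.TransGen.single ⟨hGood, hg',
              by rw [headN_true, tailN_false, tgtD_eq htn, tgtD_eq hth2],
              fun h => hh2e h.symm⟩) hg'
          case pos =>
            cases hsh2 : R.sort (R.src h2) with
            | parr =>
              exact red_tensparr hWF hC hsn hstens hsh2 hbn hbsrc hbh2
                (fun h => hh2e h.symm) hprem2 rfl rfl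
            | ax =>
              exact red_axcut' hWF hC hsh2 hsn hbh2 hbn rfl hh2e
                (by rw [hprem2, Finset.pair_comm])
            | sync =>
              have hnegh2 : (R.typ h2).Negative := by
                rcases hWF.sync_concl_pol hsh2 rfl with hp | hn
                · rw [htyph2] at hp; cases hp
                · exact hn
              exact red_synccut hWF hsh2 hsn hbh2 hbn hnegh2 rfl hth2 hh2e
                (by rw [hprem2, Finset.pair_comm])
            | one =>
              have hb2 := hWF.typ_of_one hsh2 rfl
              rw [hb2] at htyph2
              exact Formula.noConfusion htyph2
            | bot =>
              have hb2 := hWF.typ_of_bot hsh2 rfl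
              rw [hb2] at htyph2
              exact Formula.noConfusion htyph2
            | tens =>
              obtain ⟨A', B', hAB'⟩ := hWF.typ_of_tens hsh2 rfl
              rw [hAB'] at htyph2
              exact Formula.noConfusion htyph2
            | cut => exact (hWF.not_src_cut hsh2 rfl).elim
        · -- the source of e is a par link, its partner has a tensor type
          obtain ⟨A, B, hAB⟩ := hWF.typ_of_parr hsparr rfl
          have htyph2 : R.typ h2 = .tens A.dual B.dual := by rw [hdual2, hAB]; rfl
          by_cases hbh2 : R.box (R.src h2) = none
          case neg =>
            have hg' : GoodT R (h2, false) := ⟨n, hth2, hbn, Or.inl hsn, Or.inl hbh2⟩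
            exact IH _ (Relation.TransGen.single ⟨hGood, hg',
              by rw [headN_true, tailN_false, tgtD_eq htn, tgtD_eq hth2],
              fun h => hh2e h.symm⟩) hg'
          case pos =>
            cases hsh2 : R.sort (R.src h2) with
            | tens =>
              exact red_tensparr hWF hC hsn hsh2 hsparr hbn hbh2 hbsrc
                hh2e (by rw [hprem2, Finset.pair_comm]) rfl rfl
            | ax =>
              exact red_axcut' hWF hC hsh2 hsn hbh2 hbn rfl hh2e
                (by rw [hprem2, Finset.pair_comm])
            | sync =>
              have hg' : GoodT R (h2, false) := ⟨n, hth2, hbn, Or.inl hsn,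
                Or.inr (Or.inl hsh2)⟩
              exact IH _ (Relation.TransGen.single ⟨hGood, hg',
                by rw [headN_true, tailN_false, tgtD_eq htn, tgtD_eq hth2],
                fun h => hh2e h.symm⟩) hg'
            | one =>
              have hb2 := hWF.typ_of_one hsh2 rfl
              rw [hb2] at htyph2
              exact Formula.noConfusion htyph2
            | bot =>
              have hb2 := hWF.typ_of_bot hsh2 rfl
              rw [hb2] at htyph2
              exact Formula.noConfusion htyph2
            | parr =>
              obtain ⟨A', B', hAB'⟩ := hWF.typ_of_parr hsh2 rfl
              rw [hAB'] at htyph2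
              exact Formula.noConfusion htyph2
            | cut => exact (hWF.not_src_cut hsh2 rfl).elim
        · -- the source of e is a sync link: sync/cut fires
          have hnege : (R.typ e).Negative := by
            rcases hWF.sync_concl_pol hssync rfl with hp | hn
            · rw [hp.hasBot] at hbot
              exact absurd hbot (by simp)
            · exact hn
          exact red_synccut hWF hssync hsn hbsrc hbn hnege rfl htn
            (fun h => hh2e h.symm) hprem2

end Struct

end MainWalk

/-- **Lazy Cut Elimination.**  Let `R` be a closed SMLL net (no occurrence of
`⊥` in its conclusions).  If `R` is in normal form for the reduction relation
`→`, then `R` is cut-free. -/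
theorem smll_lazy_cut_elimination (R : Struct) (hWF : R.WF) (hC : R.Correct)
    (hcl : R.Closed) (hnf : ∀ Q : Struct, ¬ Step R Q) :
    ∀ n : R.Node, R.sort n ≠ .cut := by
  classical
  intro n0 hcut
  suffices hred : ∃ Q, Step R Q by
    obtain ⟨Q, hQ⟩ := hred
    exact hnf Q hQ
  by_cases hbots : ∃ b, R.sort b = .bot
  · -- start the walk at the lock of a depth-0 box
    obtain ⟨b, hb⟩ := hbots
    obtain ⟨b0, hb0s, hb0n⟩ : ∃ b0, R.sort b0 = .bot ∧ R.box b0 = none := by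
      cases hbx : R.box b with
      | none => exact ⟨b, hb, hbx⟩
      | some b' => exact hWF.exists_bot0 hbx
    obtain ⟨-, k, hk, hkt⟩ := hWF.bot b0 hb0s
    have hsk : R.src k = b0 := Struct.mem_concls.mp (by rw [hk]; simp)
    exact Struct.walk_red hWF hC hcl (k, true)
      ⟨by rw [hsk]; exact hb0n, by rw [hkt]; rfl, Or.inl (by rw [hsk]; exact hb0s)⟩
  · -- no `⊥`-links at all: analyse the cut directly
    push_neg at hbots
    have hnb : ∀ m : R.Node, R.box m = none := by
      intro m
      cases hbx : R.box m with
      | none => rfl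
      | some b' => exact absurd (hWF.box_sort hbx) (hbots b')
    obtain ⟨-, f, g, hfg, hprem, hdual⟩ := hWF.cut n0 hcut
    have htf : R.tgt f = some n0 := Struct.mem_prems.mp (by rw [hprem]; simp)
    have htg : R.tgt g = some n0 := Struct.mem_prems.mp (by rw [hprem]; simp)
    cases hsf : R.sort (R.src f) with
    | ax => exact Struct.red_axcut' hWF hC hsf hcut (hnb _) (hnb _) rfl hfg hprem
    | cut => exact (hWF.not_src_cut hsf rfl).elim
    | bot => exact absurd hsf (hbots _)
    | sync =>
      rcases hWF.sync_concl_pol hsf rfl with hpos | hneg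
      · exact Struct.walk_red hWF hC hcl (f, false)
          ⟨n0, htf, hnb n0, Or.inl hcut, Or.inr (Or.inl hsf)⟩
      · exact Struct.red_synccut hWF hsf hcut (hnb _) (hnb _) hneg rfl htf hfg hprem
    | one =>
      have htypf : R.typ f = .one := hWF.typ_of_one hsf rfl
      have htypg : R.typ g = .bot := by rw [hdual, htypf]; rfl
      cases hsg : R.sort (R.src g) with
      | ax =>
        exact Struct.red_axcut' hWF hC hsg hcut (hnb _) (hnb _) rfl
          (fun h => hfg h.symm) (by rw [hprem, Finset.pair_comm])
      | sync =>
        exact Struct.red_synccut hWF hsg hcut (hnb _) (hnb _)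
          (htypg ▸ Formula.Negative.bot) rfl htg (fun h => hfg h.symm)
          (by rw [hprem, Finset.pair_comm])
      | bot => exact absurd hsg (hbots _)
      | one =>
        have hb2 := hWF.typ_of_one hsg rfl
        rw [hb2] at htypg
        exact Formula.noConfusion htypg
      | tens =>
        obtain ⟨A, B, hAB⟩ := hWF.typ_of_tens hsg rfl
        rw [hAB] at htypg
        exact Formula.noConfusion htypg
      | parr =>
        obtain ⟨A, B, hAB⟩ := hWF.typ_of_parr hsg rfl
        rw [hAB] at htypg
        exact Formula.noConfusion htypg
      | cut => exact (hWF.not_src_cut hsg rfl).elim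
    | tens =>
      obtain ⟨A, B, hAB⟩ := hWF.typ_of_tens hsf rfl
      have htypg : R.typ g = .parr A.dual B.dual := by rw [hdual, hAB]; rfl
      cases hsg : R.sort (R.src g) with
      | parr =>
        exact Struct.red_tensparr hWF hC hcut hsf hsg (hnb _) (hnb _)
          (hnb _) hfg hprem rfl rfl
      | ax =>
        exact Struct.red_axcut' hWF hC hsg hcut (hnb _) (hnb _) rfl
          (fun h => hfg h.symm) (by rw [hprem, Finset.pair_comm])
      | sync =>
        have hnegg : (R.typ g).Negative := by
          rcases hWF.sync_concl_pol hsg rfl with hp | hn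
          · rw [htypg] at hp; cases hp
          · exact hn
        exact Struct.red_synccut hWF hsg hcut (hnb _) (hnb _) hnegg rfl htg
          (fun h => hfg h.symm) (by rw [hprem, Finset.pair_comm])
      | bot => exact absurd hsg (hbots _)
      | one =>
        have hb2 := hWF.typ_of_one hsg rfl
        rw [hb2] at htypg
        exact Formula.noConfusion htypg
      | tens =>
        obtain ⟨A', B', hAB'⟩ := hWF.typ_of_tens hsg rfl
        rw [hAB'] at htypg
        exact Formula.noConfusion htypg
      | cut => exact (hWF.not_src_cut hsg rfl).elim
    | parr =>
      obtain ⟨A, B, hAB⟩ := hWF.typ_of_parr hsf rfl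
      have htypg : R.typ g = .tens A.dual B.dual := by rw [hdual, hAB]; rfl
      cases hsg : R.sort (R.src g) with
      | tens =>
        exact Struct.red_tensparr hWF hC hcut hsg hsf (hnb _) (hnb _)
          (hnb _) (fun h => hfg h.symm) (by rw [hprem, Finset.pair_comm]) rfl rfl
      | ax =>
        exact Struct.red_axcut' hWF hC hsg hcut (hnb _) (hnb _) rfl
          (fun h => hfg h.symm) (by rw [hprem, Finset.pair_comm])
      | sync =>
        exact Struct.walk_red hWF hC hcl (g, false)
          ⟨n0, htg, hnb n0, Or.inl hcut, Or.inr (Or.inl hsg)⟩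
      | bot => exact absurd hsg (hbots _)
      | one =>
        have hb2 := hWF.typ_of_one hsg rfl
        rw [hb2] at htypg
        exact Formula.noConfusion htypg
      | parr =>
        obtain ⟨A', B', hAB'⟩ := hWF.typ_of_parr hsg rfl
        rw [hAB'] at htypg
        exact Formula.noConfusion htypg
      | cut => exact (hWF.not_src_cut hsg rfl).elim
end

section
/- Let R be an SMLL net and M_R its SIAM machine. Every state T of M_R reachable from the initial state I_R via the transition relation ⟶ is an injective function. -/
/-! ## Auxiliary development for injectivity of reachable SIAM states -/

namespace SIAMInj

open Formula

theorem sub_dual : ∀ (A : Formula) (m : Addr),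
    Formula.sub A.dual m = (Formula.sub A m).map Formula.dual
  | .one, [] => rfl
  | .one, b :: _ => by cases b <;> rfl
  | .bot, [] => rfl
  | .bot, b :: _ => by cases b <;> rfl
  | .var _, [] => rfl
  | .var _, b :: _ => by cases b <;> rfl
  | .covar _, [] => rfl
  | .covar _, b :: _ => by cases b <;> rfl
  | .tens _ _, [] => rfl
  | .tens A _, false :: m => sub_dual A m
  | .tens _ B, true :: m => sub_dual B m
  | .parr _ _, [] => rfl
  | .parr A _, false :: m => sub_dual A m
  | .parr _ B, true :: m => sub_dual B m

theorem dual_dual : ∀ A : Formula, A.dual.dual = A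
  | .one => rfl
  | .bot => rfl
  | .var _ => rfl
  | .covar _ => rfl
  | .tens A B => by simp [Formula.dual, dual_dual A, dual_dual B]
  | .parr A B => by simp [Formula.dual, dual_dual A, dual_dual B]

theorem negOcc_dual {A : Formula} {m : Addr} (h : NegOcc A m) : PosOcc A.dual m := by
  obtain ⟨a, ha, h⟩ := h
  refine ⟨a.dual, by rw [sub_dual, ha]; rfl, ?_⟩
  rcases h with rfl | ⟨n, rfl⟩
  · exact Or.inl rfl
  · exact Or.inr ⟨n, rfl⟩

theorem posOcc_dual {A : Formula} {m : Addr} (h : PosOcc A m) : NegOcc A.dual m := by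
  obtain ⟨a, ha, h⟩ := h
  refine ⟨a.dual, by rw [sub_dual, ha]; rfl, ?_⟩
  rcases h with rfl | ⟨n, rfl⟩
  · exact Or.inl rfl
  · exact Or.inr ⟨n, rfl⟩

theorem negOcc_of_dual {A : Formula} {m : Addr} (h : NegOcc A.dual m) : PosOcc A m := by
  have := negOcc_dual h  -- wrong direction; fix below
  exact (dual_dual A) ▸ this

theorem posOcc_of_dual {A : Formula} {m : Addr} (h : PosOcc A.dual m) : NegOcc A m := by
  have := posOcc_dual h
  exact (dual_dual A) ▸ this

theorem posOcc_not_negOcc {A : Formula} {m : Addr} (h : PosOcc A m) :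
    ¬ NegOcc A m := by
  rintro ⟨a, ha, h2⟩
  obtain ⟨a', ha', h1⟩ := h
  rw [ha] at ha'
  cases ha'
  rcases h1 with rfl | ⟨n, rfl⟩ <;> rcases h2 with h2 | ⟨k, h2⟩ <;> cases h2

theorem positive_posOcc {A : Formula} (h : Positive A) :
    ∀ {m : Addr}, AtomOcc A m → PosOcc A m := by
  induction h with
  | one =>
      rintro m ⟨a, ha, hia⟩
      cases m with
      | nil => exact ⟨.one, rfl, Or.inl rfl⟩
      | cons b m => simp [Formula.sub] at ha
  | @tens A B _ _ ihA ihB =>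
      rintro m ⟨a, ha, hia⟩
      match m with
      | [] =>
          rw [show Formula.sub (.tens A B) [] = some (.tens A B) from rfl] at ha
          cases ha
          simp [Formula.IsAtom] at hia
      | false :: m => exact ihA ⟨a, ha, hia⟩
      | true :: m => exact ihB ⟨a, ha, hia⟩

theorem negative_negOcc {A : Formula} (h : Negative A) :
    ∀ {m : Addr}, AtomOcc A m → NegOcc A m := by
  induction h with
  | bot =>
      rintro m ⟨a, ha, hia⟩
      cases m with
      | nil => exact ⟨.bot, rfl, Or.inl rfl⟩
      | cons b m => simp [Formula.sub] at ha
  | @parr A B _ _ ihA ihB =>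
      rintro m ⟨a, ha, hia⟩
      match m with
      | [] =>
          rw [show Formula.sub (.parr A B) [] = some (.parr A B) from rfl] at ha
          cases ha
          simp [Formula.IsAtom] at hia
      | false :: m => exact ihA ⟨a, ha, hia⟩
      | true :: m => exact ihB ⟨a, ha, hia⟩

theorem not_negOcc_one : ¬ NegOcc Formula.one [] := by
  rintro ⟨a, ha, h⟩
  cases ha
  rcases h with h | ⟨n, h⟩ <;> cases h

theorem mem_concls {S : Struct} {n : S.Node} {e : S.Edge} :
    e ∈ S.concls n ↔ S.src e = n := by simp [Struct.concls]

theorem mem_prems {S : Struct} {n : S.Node} {e : S.Edge} :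
    e ∈ S.prems n ↔ S.tgt e = some n := by simp [Struct.prems]

theorem pair_unique {α : Type*} [DecidableEq α] {s : Finset α} {e f x y z : α}
    (hs : s = {e, f}) (hx : x ∈ s) (hy : y ∈ s) (hz : z ∈ s)
    (hxz : x ≠ z) (hyz : y ≠ z) : x = y := by
  subst hs
  simp only [Finset.mem_insert, Finset.mem_singleton] at hx hy hz
  rcases hx with rfl | rfl <;> rcases hy with rfl | rfl <;>
    rcases hz with rfl | rfl <;> tauto

/-- The backward-step relation on token values. -/
inductive Back (S : Struct) : Struct.PosVal S → Struct.PosVal S → Prop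
  | ax {e' e : S.Edge} {m : Formula.Addr} {a : S.Node} :
      PosOcc (S.typ e') m → S.src e' = a → S.sort a = .ax →
      S.src e = a → e ≠ e' → Back S (.atom e' m) (.atom e m)
  | cut {e' e : S.Edge} {m : Formula.Addr} {c : S.Node} :
      NegOcc (S.typ e') m → S.tgt e' = some c → S.sort c = .cut →
      S.tgt e = some c → e ≠ e' → Back S (.atom e' m) (.atom e m)
  | multDown {g e : S.Edge} {m : Formula.Addr} {b : Bool} {n : S.Node} :
      PosOcc (S.typ g) (b :: m) → S.src g = n →
      (S.sort n = .tens ∨ S.sort n = .parr) → S.tgt e = some n →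
      S.pIdx e = (if b then 1 else 0) → Back S (.atom g (b :: m)) (.atom e m)
  | multUp {e g : S.Edge} {m : Formula.Addr} {b : Bool} {n : S.Node} :
      NegOcc (S.typ e) m → S.tgt e = some n →
      (S.sort n = .tens ∨ S.sort n = .parr) → S.src g = n →
      S.pIdx e = (if b then 1 else 0) → Back S (.atom e m) (.atom g (b :: m))
  | syncDown {e' e : S.Edge} {m : Formula.Addr} {l : S.Node} :
      PosOcc (S.typ e') m → S.src e' = l → S.sort l = .sync →
      S.tgt e = some l → S.pIdx e = S.cIdx e' → Back S (.atom e' m) (.atom e m)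
  | syncUp {e' e : S.Edge} {m : Formula.Addr} {l : S.Node} :
      NegOcc (S.typ e') m → S.tgt e' = some l → S.sort l = .sync →
      S.src e = l → S.cIdx e = S.pIdx e' → Back S (.atom e' m) (.atom e m)
  | lock {e : S.Edge} {i : ℕ} : Back S (.lock e i) (.atom e [])

section Struct

variable {S : Struct}

theorem ax_out_unique (hWF : S.WF) {a : S.Node} (ha : S.sort a = .ax)
    {x y z : S.Edge} (hx : S.src x = a) (hy : S.src y = a) (hz : S.src z = a)
    (hxz : x ≠ z) (hyz : y ≠ z) : x = y := by
  obtain ⟨hax, -⟩ := hWF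
  obtain ⟨-, e, f, -, hconcls, -⟩ := hax a ha
  exact pair_unique hconcls (mem_concls.mpr hx) (mem_concls.mpr hy)
    (mem_concls.mpr hz) hxz hyz

theorem cut_in_unique (hWF : S.WF) {c : S.Node} (hc : S.sort c = .cut)
    {x y z : S.Edge} (hx : S.tgt x = some c) (hy : S.tgt y = some c)
    (hz : S.tgt z = some c) (hxz : x ≠ z) (hyz : y ≠ z) : x = y := by
  obtain ⟨-, hcut, -⟩ := hWF
  obtain ⟨-, e, f, -, hprems, -⟩ := hcut c hc
  exact pair_unique hprems (mem_prems.mpr hx) (mem_prems.mpr hy)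
    (mem_prems.mpr hz) hxz hyz

theorem mult_spec (hWF : S.WF) {n : S.Node}
    (hn : S.sort n = .tens ∨ S.sort n = .parr) :
    ∃ e f g, e ≠ f ∧ S.prems n = {e, f} ∧ S.pIdx e = 0 ∧ S.pIdx f = 1 ∧
      S.concls n = {g} ∧
      (S.typ g = .tens (S.typ e) (S.typ f) ∨ S.typ g = .parr (S.typ e) (S.typ f)) := by
  obtain ⟨-, -, ht, hp, -⟩ := hWF
  rcases hn with hn | hn
  · obtain ⟨e, f, g, h1, h2, h3, h4, h5, h6⟩ := ht n hn
    exact ⟨e, f, g, h1, h2, h3, h4, h5, Or.inl h6⟩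
  · obtain ⟨e, f, g, h1, h2, h3, h4, h5, h6⟩ := hp n hn
    exact ⟨e, f, g, h1, h2, h3, h4, h5, Or.inr h6⟩

theorem mult_concl_unique (hWF : S.WF) {n : S.Node}
    (hn : S.sort n = .tens ∨ S.sort n = .parr)
    {x y : S.Edge} (hx : S.src x = n) (hy : S.src y = n) : x = y := by
  obtain ⟨e, f, g, -, -, -, -, hconcls, -⟩ := mult_spec hWF hn
  have hx' := mem_concls.mpr hx
  have hy' := mem_concls.mpr hy
  rw [hconcls, Finset.mem_singleton] at hx' hy'
  rw [hx', hy']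

theorem mult_prem_unique (hWF : S.WF) {n : S.Node}
    (hn : S.sort n = .tens ∨ S.sort n = .parr)
    {x y : S.Edge} (hx : S.tgt x = some n) (hy : S.tgt y = some n)
    (hxy : S.pIdx x = S.pIdx y) : x = y := by
  obtain ⟨e, f, g, hef, hprems, hpe, hpf, -, -⟩ := mult_spec hWF hn
  have hx' := mem_prems.mpr hx
  have hy' := mem_prems.mpr hy
  rw [hprems] at hx' hy'
  simp only [Finset.mem_insert, Finset.mem_singleton] at hx' hy'
  rcases hx' with rfl | rfl <;> rcases hy' with rfl | rfl <;>
    first | rfl | (rw [hpe, hpf] at hxy; omega)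

theorem mult_occ (hWF : S.WF) {n : S.Node} {g e : S.Edge} {b : Bool}
    (hn : S.sort n = .tens ∨ S.sort n = .parr) (hg : S.src g = n)
    (he : S.tgt e = some n) (hb : S.pIdx e = (if b then 1 else 0)) :
    ∀ m : Addr, Formula.sub (S.typ g) (b :: m) = Formula.sub (S.typ e) m := by
  intro m
  obtain ⟨e0, f0, g0, hef, hprems, hpe, hpf, hconcls, htyp⟩ := mult_spec hWF hn
  have hg' := mem_concls.mpr hg
  rw [hconcls, Finset.mem_singleton] at hg'
  subst hg'
  have he' := mem_prems.mpr he
  rw [hprems] at he'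
  simp only [Finset.mem_insert, Finset.mem_singleton] at he'
  cases b with
  | false =>
      have : e = e0 := by
        rcases he' with rfl | rfl
        · rfl
        · rw [hpf] at hb; simp at hb
      subst this
      rcases htyp with h | h <;> rw [h] <;> rfl
  | true =>
      have : e = f0 := by
        rcases he' with rfl | rfl
        · rw [hpe] at hb; simp at hb
        · rfl
      subst this
      rcases htyp with h | h <;> rw [h] <;> rfl

theorem sync_spec (hWF : S.WF) {l : S.Node} (hl : S.sort l = .sync) :
    (∀ e ∈ S.prems l, (S.typ e).Polarized) ∧
    (∀ e ∈ S.prems l, ∃! f, f ∈ S.concls l ∧ S.cIdx f = S.pIdx e) ∧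
    (∀ f ∈ S.concls l, ∃! e, e ∈ S.prems l ∧ S.pIdx e = S.cIdx f) ∧
    (∀ e ∈ S.prems l, ∀ f ∈ S.concls l, S.cIdx f = S.pIdx e → S.typ f = S.typ e) := by
  obtain ⟨-, -, -, -, -, -, hs, -⟩ := hWF
  exact hs l hl

theorem sync_prem_unique (hWF : S.WF) {l : S.Node} (hl : S.sort l = .sync)
    {f x y : S.Edge} (hf : S.src f = l) (hx : S.tgt x = some l)
    (hpx : S.pIdx x = S.cIdx f) (hy : S.tgt y = some l)
    (hpy : S.pIdx y = S.cIdx f) : x = y := by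
  obtain ⟨-, -, hcp, -⟩ := sync_spec hWF hl
  obtain ⟨e0, -, huniq⟩ := hcp f (mem_concls.mpr hf)
  exact (huniq x ⟨mem_prems.mpr hx, hpx⟩).trans (huniq y ⟨mem_prems.mpr hy, hpy⟩).symm

theorem sync_concl_unique (hWF : S.WF) {l : S.Node} (hl : S.sort l = .sync)
    {e x y : S.Edge} (he : S.tgt e = some l) (hx : S.src x = l)
    (hpx : S.cIdx x = S.pIdx e) (hy : S.src y = l)
    (hpy : S.cIdx y = S.pIdx e) : x = y := by
  obtain ⟨-, hpc, -⟩ := sync_spec hWF hl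
  obtain ⟨f0, -, huniq⟩ := hpc e (mem_prems.mpr he)
  exact (huniq x ⟨mem_concls.mpr hx, hpx⟩).trans (huniq y ⟨mem_concls.mpr hy, hpy⟩).symm

theorem sync_typ (hWF : S.WF) {l : S.Node} (hl : S.sort l = .sync)
    {e f : S.Edge} (he : S.tgt e = some l) (hf : S.src f = l)
    (hc : S.cIdx f = S.pIdx e) : S.typ f = S.typ e := by
  obtain ⟨-, -, -, hty⟩ := sync_spec hWF hl
  exact hty e (mem_prems.mpr he) f (mem_concls.mpr hf) hc

theorem ax_dual_occ (hWF : S.WF) {a : S.Node} {e e' : S.Edge} {m : Addr}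
    (ha : S.sort a = .ax) (he : S.src e = a) (he' : S.src e' = a) (hne : e ≠ e')
    (h : NegOcc (S.typ e) m) : PosOcc (S.typ e') m := by
  obtain ⟨hax, -⟩ := hWF
  obtain ⟨-, f, g, hfg, hconcls, hdual⟩ := hax a ha
  have hem := mem_concls.mpr he
  have hem' := mem_concls.mpr he'
  rw [hconcls] at hem hem'
  simp only [Finset.mem_insert, Finset.mem_singleton] at hem hem'
  rcases hem with rfl | rfl <;> rcases hem' with rfl | rfl
  · exact absurd rfl hne
  · rw [hdual]; exact negOcc_dual h
  · rw [hdual] at h; exact negOcc_of_dual h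
  · exact absurd rfl hne

theorem cut_dual_occ (hWF : S.WF) {c : S.Node} {e e' : S.Edge} {m : Addr}
    (hc : S.sort c = .cut) (he : S.tgt e = some c) (he' : S.tgt e' = some c)
    (hne : e ≠ e') (h : PosOcc (S.typ e) m) : NegOcc (S.typ e') m := by
  obtain ⟨-, hcut, -⟩ := hWF
  obtain ⟨-, f, g, hfg, hprems, hdual⟩ := hcut c hc
  have hem := mem_prems.mpr he
  have hem' := mem_prems.mpr he'
  rw [hprems] at hem hem'
  simp only [Finset.mem_insert, Finset.mem_singleton] at hem hem'
  rcases hem with rfl | rfl <;> rcases hem' with rfl | rfl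
  · exact absurd rfl hne
  · rw [hdual]; exact posOcc_dual h
  · rw [hdual] at h; exact posOcc_of_dual h
  · exact absurd rfl hne

theorem one_typ (hWF : S.WF) {e : S.Edge} (h : S.sort (S.src e) = .one) :
    S.typ e = .one := by
  obtain ⟨-, -, -, -, hone, -⟩ := hWF
  obtain ⟨-, e0, hconcls, htyp⟩ := hone (S.src e) h
  have := mem_concls.mpr (rfl : S.src e = S.src e)
  rw [hconcls, Finset.mem_singleton] at this
  rw [this, htyp]

theorem back_det (hWF : S.WF) {v u u' : Struct.PosVal S}
    (h1 : Back S v u) (h2 : Back S v u') : u = u' := by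
  cases h1 with
  | ax hp1 hs1 ha1 he1 hn1 =>
      cases h2 with
      | ax hp2 hs2 ha2 he2 hn2 =>
          rw [hs1] at hs2; subst hs2
          rw [ax_out_unique hWF ha1 he1 he2 hs1 hn1 hn2]
      | cut hp2 => exact absurd hp2 (posOcc_not_negOcc hp1)
      | multDown hp2 hs2 hm2 => rw [hs1] at hs2; subst hs2
                                rcases hm2 with h | h <;> rw [ha1] at h <;> cases h
      | multUp hp2 => exact absurd hp2 (posOcc_not_negOcc hp1)
      | syncDown hp2 hs2 hl2 => rw [hs1] at hs2; subst hs2; rw [ha1] at hl2; cases hl2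
      | syncUp hp2 => exact absurd hp2 (posOcc_not_negOcc hp1)
  | cut hn1 ht1 hc1 he1 hne1 =>
      cases h2 with
      | ax hp2 => exact absurd hn1 (posOcc_not_negOcc hp2)
      | cut hn2 ht2 hc2 he2 hne2 =>
          rw [ht1] at ht2; cases ht2
          rw [cut_in_unique hWF hc1 he1 he2 ht1 hne1 hne2]
      | multDown hp2 => exact absurd hn1 (posOcc_not_negOcc hp2)
      | multUp hn2 ht2 hm2 =>
          rw [ht1] at ht2; cases ht2
          rcases hm2 with h | h <;> rw [hc1] at h <;> cases h
      | syncDown hp2 => exact absurd hn1 (posOcc_not_negOcc hp2)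
      | syncUp hn2 ht2 hl2 => rw [ht1] at ht2; cases ht2; rw [hc1] at hl2; cases hl2
  | multDown hp1 hs1 hm1 ht1 hb1 =>
      cases h2 with
      | ax hp2 hs2 ha2 =>
          rw [hs1] at hs2; subst hs2
          rcases hm1 with h | h <;> rw [ha2] at h <;> cases h
      | cut hn2 => exact absurd hn2 (posOcc_not_negOcc hp1)
      | multDown hp2 hs2 hm2 ht2 hb2 =>
          rw [hs1] at hs2; subst hs2
          rw [mult_prem_unique hWF hm1 ht1 ht2 (by rw [hb1, hb2])]
      | multUp hn2 => exact absurd hn2 (posOcc_not_negOcc hp1)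
      | syncDown hp2 hs2 hl2 => rw [hs1] at hs2; subst hs2
                                rcases hm1 with h | h <;> rw [hl2] at h <;> cases h
      | syncUp hn2 => exact absurd hn2 (posOcc_not_negOcc hp1)
  | multUp hn1 ht1 hm1 hs1 hb1 =>
      cases h2 with
      | ax hp2 => exact absurd hn1 (posOcc_not_negOcc hp2)
      | cut hn2 ht2 hc2 =>
          rw [ht1] at ht2; cases ht2
          rcases hm1 with h | h <;> rw [hc2] at h <;> cases h
      | multDown hp2 => exact absurd hn1 (posOcc_not_negOcc hp2)
      | multUp hn2 ht2 hm2 hs2 hb2 =>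
          rename_i e0 g1 m0 b1 n1 g2 b2 n2
          rw [ht1] at ht2; cases ht2
          have hgg := mult_concl_unique hWF hm1 hs1 hs2
          subst hgg
          have hbb : b1 = b2 := by
            rw [hb1] at hb2
            cases b1 <;> cases b2 <;> simp_all
          rw [hbb]
      | syncDown hp2 => exact absurd hn1 (posOcc_not_negOcc hp2)
      | syncUp hn2 ht2 hl2 => rw [ht1] at ht2; cases ht2
                              rcases hm1 with h | h <;> rw [hl2] at h <;> cases h
  | syncDown hp1 hs1 hl1 ht1 hi1 =>
      cases h2 with
      | ax hp2 hs2 ha2 => rw [hs1] at hs2; subst hs2; rw [hl1] at ha2; cases ha2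
      | cut hn2 => exact absurd hn2 (posOcc_not_negOcc hp1)
      | multDown hp2 hs2 hm2 => rw [hs1] at hs2; subst hs2
                                rcases hm2 with h | h <;> rw [hl1] at h <;> cases h
      | multUp hn2 => exact absurd hn2 (posOcc_not_negOcc hp1)
      | syncDown hp2 hs2 hl2 ht2 hi2 =>
          rw [hs1] at hs2; subst hs2
          rw [sync_prem_unique hWF hl1 hs1 ht1 hi1 ht2 hi2]
      | syncUp hn2 => exact absurd hn2 (posOcc_not_negOcc hp1)
  | syncUp hn1 ht1 hl1 hs1 hi1 =>
      cases h2 with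
      | ax hp2 => exact absurd hn1 (posOcc_not_negOcc hp2)
      | cut hn2 ht2 hc2 => rw [ht1] at ht2; cases ht2; rw [hl1] at hc2; cases hc2
      | multDown hp2 => exact absurd hn1 (posOcc_not_negOcc hp2)
      | multUp hn2 ht2 hm2 => rw [ht1] at ht2; cases ht2
                              rcases hm2 with h | h <;> rw [hl1] at h <;> cases h
      | syncDown hp2 => exact absurd hn1 (posOcc_not_negOcc hp2)
      | syncUp hn2 ht2 hl2 hs2 hi2 =>
          rw [ht1] at ht2; cases ht2
          rw [sync_concl_unique hWF hl1 ht1 hs1 hi1 hs2 hi2]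
  | lock =>
      cases h2 with
      | lock => rfl

theorem origin_norm (hWF : S.WF) {p : S.Edge × Formula.Addr}
    (hp : S.InitPos p ∨ S.OnePos p) :
    ∀ u, ¬ Back S (.atom p.1 p.2) u := by
  obtain ⟨pe, pm⟩ := p
  intro u hu
  rcases hp with ⟨hconcl, hneg⟩ | ⟨honeSrc, hnil⟩
  · simp only at hconcl hneg
    cases hu with
    | ax hp2 => exact absurd hneg (posOcc_not_negOcc hp2)
    | cut _ ht2 => rw [hconcl] at ht2; cases ht2
    | multDown hp2 => exact absurd hneg (posOcc_not_negOcc hp2)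
    | multUp _ ht2 => rw [hconcl] at ht2; cases ht2
    | syncDown hp2 => exact absurd hneg (posOcc_not_negOcc hp2)
    | syncUp _ ht2 => rw [hconcl] at ht2; cases ht2
  · simp only at honeSrc hnil
    subst hnil
    have htyp : S.typ pe = .one := one_typ hWF honeSrc
    cases hu with
    | ax _ hs2 ha2 => rw [hs2] at honeSrc; rw [honeSrc] at ha2; cases ha2
    | cut hn2 => rw [htyp] at hn2; exact not_negOcc_one hn2
    | multUp hn2 => rw [htyp] at hn2; exact not_negOcc_one hn2
    | syncDown _ hs2 hl2 => rw [hs2] at honeSrc; rw [honeSrc] at hl2; cases hl2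
    | syncUp hn2 => rw [htyp] at hn2; exact not_negOcc_one hn2

theorem nf_unique {α : Type*} {r : α → α → Prop}
    (hdet : ∀ a b c, r a b → r a c → b = c) {a b c : α}
    (hab : Relation.ReflTransGen r a b) (hac : Relation.ReflTransGen r a c)
    (hb : ∀ x, ¬ r b x) (hc : ∀ x, ¬ r c x) : b = c := by
  induction hab using Relation.ReflTransGen.head_induction_on with
  | refl =>
      rcases hac.cases_head with rfl | ⟨x, hx, -⟩
      · rfl
      · exact absurd hx (hb x)
  | head hstep hrest ih =>
      rcases hac.cases_head with rfl | ⟨x, hx, hxc⟩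
      · exact absurd hstep (hc _)
      · exact ih (hdet _ _ _ hstep hx ▸ hxc)

/-- The invariant: every token's value back-traces to its origin position. -/
def Inv (T : SState S) : Prop :=
  ∀ p v, T.f p = some v → Relation.ReflTransGen (Back S) v (.atom p.1 p.2)

theorem inv_init : Inv (initState S) := by
  intro p v hv
  simp only [initState] at hv
  split_ifs at hv with h
  all_goals cases hv
  exact .refl

theorem inv_step (hWF : S.WF) {T T' : SState S} (h : STrans S T T')
    (ih : Inv T) : Inv T' := by
  cases h with
  | axUp hT hNeg hsrc hsort hact hsrc' hne hoth hnew =>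
      rename_i p0 e e' m a
      intro p v hv
      by_cases hp : p = p0
      · subst hp
        rw [hnew] at hv; cases hv
        exact .head (Back.ax (ax_dual_occ hWF hsort hsrc hsrc' (Ne.symm hne) hNeg)
          hsrc' hsort hsrc hne.symm) (ih _ _ hT)
      · rw [hoth p hp] at hv; exact ih _ _ hv
  | cutDown hT hPos htgt hsort hact htgt' hne hoth hnew =>
      rename_i p0 e e' m c
      intro p v hv
      by_cases hp : p = p0
      · subst hp
        rw [hnew] at hv; cases hv
        exact .head (Back.cut (cut_dual_occ hWF hsort htgt htgt' (Ne.symm hne) hPos)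
          htgt' hsort htgt hne.symm) (ih _ _ hT)
      · rw [hoth p hp] at hv; exact ih _ _ hv
  | multDown hT hPos htgt hsort hact hsrc hb hoth hnew =>
      rename_i p0 e g m n b
      intro p v hv
      by_cases hp : p = p0
      · subst hp
        rw [hnew] at hv; cases hv
        have hocc : PosOcc (S.typ g) (b :: m) := by
          obtain ⟨a, ha, hcl⟩ := hPos
          exact ⟨a, (mult_occ hWF hsort hsrc htgt hb m).trans ha, hcl⟩
        exact .head (Back.multDown hocc hsrc hsort htgt hb) (ih _ _ hT)
      · rw [hoth p hp] at hv; exact ih _ _ hv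
  | multUp hT hNeg hsrc hsort hact htgt hb hoth hnew =>
      rename_i p0 e g m n b
      intro p v hv
      by_cases hp : p = p0
      · subst hp
        rw [hnew] at hv; cases hv
        have hocc : NegOcc (S.typ e) m := by
          obtain ⟨a, ha, hcl⟩ := hNeg
          exact ⟨a, ((mult_occ hWF hsort hsrc htgt hb m).symm.trans ha), hcl⟩
        exact .head (Back.multUp hocc htgt hsort hsrc hb) (ih _ _ hT)
      · rw [hoth p hp] at hv; exact ih _ _ hv
  | lockTok hT htyp hsrc hsort hact hoth hnew =>
      rename_i p0 e b'
      intro p v hv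
      by_cases hp : p = p0
      · subst hp
        rw [hnew] at hv; cases hv
        exact .head Back.lock (ih _ _ hT)
      · rw [hoth p hp] at hv; exact ih _ _ hv
  | oneSpawn hsort hact hsrc hnone hoth hnew =>
      rename_i n e
      intro p v hv
      by_cases hp : p = (e, [])
      · subst hp
        rw [hnew] at hv; cases hv
        exact .refl
      · rw [hoth p hp] at hv; exact ih _ _ hv
  | syncCross hsort hact hsome hsat hposCross hnegCross hquiet =>
      rename_i l
      intro p v hv
      rcases hTp : T.f p with _ | w
      · rw [hquiet p (by intro e m he; rw [hTp] at he; cases he)] at hv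
        rw [hTp] at hv; cases hv
      · rcases w with ⟨e, m⟩ | ⟨e, i⟩
        · by_cases hcp : S.tgt e = some l ∧ (S.typ e).Positive
          · obtain ⟨e', hse', hci', hv'⟩ := hposCross p e m hTp hcp.1 hcp.2
            rw [hv'] at hv; cases hv
            have hocc : PosOcc (S.typ e') m := by
              rw [sync_typ hWF hsort hcp.1 hse' hci']
              exact positive_posOcc hcp.2 (T.val_valid _ _ hTp)
            exact .head (Back.syncDown hocc hse' hsort hcp.1 hci'.symm) (ih _ _ hTp)
          · by_cases hcn : S.src e = l ∧ (S.typ e).Negative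
            · obtain ⟨e', hte', hpi', hv'⟩ := hnegCross p e m hTp hcn.1 hcn.2
              rw [hv'] at hv; cases hv
              have hocc : NegOcc (S.typ e') m := by
                rw [← sync_typ hWF hsort hte' hcn.1 hpi'.symm]
                exact negative_negOcc hcn.2 (T.val_valid _ _ hTp)
              exact .head (Back.syncUp hocc hte' hsort hcn.1 hpi'.symm) (ih _ _ hTp)
            · rw [hquiet p (by intro e2 m2 he2; rw [hTp] at he2; cases he2; exact ⟨hcp, hcn⟩)] at hv
              exact ih _ _ hv
        · rw [hquiet p (by intro e2 m2 he2; rw [hTp] at he2; cases he2)] at hv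
          exact ih _ _ hv

end Struct

end SIAMInj

/-- **Injectivity of reachable SIAM states.**  Every state of the SIAM
machine `M_R` reachable from the initial state `I_R` is an injective
function. -/
theorem siam_states_injective (R : Struct) (hWF : R.WF) (hC : R.Correct)
    (T : SState R) (h : Relation.ReflTransGen (STrans R) (initState R) T) :
    ∀ p q v, T.f p = some v → T.f q = some v → p = q := by
  have hinv : SIAMInj.Inv T := by
    induction h with
    | refl => exact SIAMInj.inv_init
    | tail _ hstep ih => exact SIAMInj.inv_step hWF hstep ih
  intro p q v hp hq
  have hnp := SIAMInj.origin_norm hWF (T.dom_subset p (by simp [hp]))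
  have hnq := SIAMInj.origin_norm hWF (T.dom_subset q (by simp [hq]))
  have := SIAMInj.nf_unique (r := SIAMInj.Back R) (fun _ _ _ h1 h2 => SIAMInj.back_det hWF h1 h2)
    (hinv p v hp) (hinv q v hq) hnp hnq
  rw [Struct.PosVal.atom.injEq] at this
  exact Prod.ext this.1 this.2
end
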